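/- arXiv:2103.04277 — 6 statements merged into one kernel-verified Lean document; each statement's English description precedes it below -/
import Mathlib

section
/- Let I ⊆ ℝ be the closed interval with endpoints η₀ and η₁, let μ : ℝ → ℝ be twice continuously differentiable on I with μ′ > 0 on I and |μ″| ≤ M on I, and let e ∈ [0,1]. Define a := e·μ′(η₁) / (e·μ′(η₁) + (1−e)·μ′(η₀)) and ν := a·η₁ + (1−a)·η₀. Then |e·μ(η₁) + (1−e)·μ(η₀) − μ(ν)| ≤ (M/2)·(η₁ − η₀)². (This is the paper's Claim 1: the marginal conditional mean e·μ(η₁)+(1−e)·μ(η₀) equals μ(ν) up to a remainder of order τ² = (η₁−η₀)².) -/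
open Set Real

/-- First-order Taylor bound, expansion at the left endpoint. -/
lemma taylor1_fwd {a b M : ℝ} {f f' f'' : ℝ → ℝ}
    (hd1 : ∀ x ∈ Icc a b, HasDerivWithinAt f (f' x) (Icc a b) x)
    (hd2 : ∀ x ∈ Icc a b, HasDerivWithinAt f' (f'' x) (Icc a b) x)
    (hM : ∀ x ∈ Icc a b, |f'' x| ≤ M) :
    ∀ y ∈ Icc a b, |f y - f a - f' a * (y - a)| ≤ M / 2 * (y - a) ^ 2 := by
  intro y hy
  have hab : a ≤ b := hy.1.trans hy.2
  have haI : a ∈ Icc a b := ⟨le_rfl, hab⟩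
  have hlip : ∀ x ∈ Icc a b, |f' x - f' a| ≤ M * (x - a) := by
    intro x hx
    have h := (convex_Icc a b).norm_image_sub_le_of_norm_hasDerivWithin_le hd2
      (fun z hz => by simpa [Real.norm_eq_abs] using hM z hz) haI hx
    rw [Real.norm_eq_abs, Real.norm_eq_abs, abs_of_nonneg (sub_nonneg.mpr hx.1)] at h
    exact h
  set g := fun x => f x - f a - f' a * (x - a) with hg
  have hfc : ContinuousOn f (Icc a b) := fun x hx => (hd1 x hx).continuousWithinAt
  have hgc : ContinuousOn g (Icc a b) := by
    apply (hfc.sub continuousOn_const).sub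
    exact continuousOn_const.mul (continuousOn_id.sub continuousOn_const)
  have hg' : ∀ x ∈ Ico a b, HasDerivWithinAt g (f' x - f' a) (Ici x) x := by
    intro x hx
    have hxI := Ico_subset_Icc_self hx
    have h1 : HasDerivWithinAt g (f' x - f' a) (Icc a b) x := by
      have := ((hd1 x hxI).sub_const (f a)).sub
        (HasDerivWithinAt.const_mul (f' a) ((hasDerivWithinAt_id x (Icc a b)).sub_const a))
      exact this.congr_deriv (by ring)
    exact h1.mono_of_mem_nhdsWithin (Icc_mem_nhdsGE_of_mem hx)
  have hB : ∀ x, HasDerivAt (fun x => M / 2 * (x - a) ^ 2) (M * (x - a)) x := by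
    intro x
    have := (((hasDerivAt_id x).sub_const a).pow 2).const_mul (M / 2)
    refine this.congr_deriv ?_
    simp only [id_eq]
    ring
  have hbound : ∀ x ∈ Ico a b, ‖f' x - f' a‖ ≤ M * (x - a) := by
    intro x hx
    rw [Real.norm_eq_abs]
    exact hlip x (Ico_subset_Icc_self hx)
  have ha0 : ‖g a‖ ≤ M / 2 * (a - a) ^ 2 := by simp [hg]
  have := image_norm_le_of_norm_deriv_right_le_deriv_boundary hgc hg' ha0 hB hbound hy
  rwa [Real.norm_eq_abs] at this

/-- First-order Taylor bound, expansion at the right endpoint. -/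
lemma taylor1_bwd {a b M : ℝ} {f f' f'' : ℝ → ℝ}
    (hd1 : ∀ x ∈ Icc a b, HasDerivWithinAt f (f' x) (Icc a b) x)
    (hd2 : ∀ x ∈ Icc a b, HasDerivWithinAt f' (f'' x) (Icc a b) x)
    (hM : ∀ x ∈ Icc a b, |f'' x| ≤ M) :
    ∀ y ∈ Icc a b, |f y - f b - f' b * (y - b)| ≤ M / 2 * (y - b) ^ 2 := by
  intro y hy
  have hab : a ≤ b := hy.1.trans hy.2
  have hmap : MapsTo (fun t => a + b - t) (Icc a b) (Icc a b) := by
    intro t ht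
    simp only [mem_Icc] at ht ⊢
    constructor <;> linarith [ht.1, ht.2]
  have hinner : ∀ x : ℝ, HasDerivWithinAt (fun t => a + b - t) (-1 : ℝ) (Icc a b) x := by
    intro x
    simpa using (hasDerivWithinAt_id x (Icc a b)).const_sub (a + b)
  have hd1F : ∀ x ∈ Icc a b, HasDerivWithinAt (fun t => f (a + b - t))
      (-f' (a + b - x)) (Icc a b) x := by
    intro x hx
    have := (hd1 (a + b - x) (hmap hx)).comp x (hinner x) hmap
    exact this.congr_deriv (by ring)
  have hd2F : ∀ x ∈ Icc a b, HasDerivWithinAt (fun t => -f' (a + b - t))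
      (f'' (a + b - x)) (Icc a b) x := by
    intro x hx
    have := ((hd2 (a + b - x) (hmap hx)).comp x (hinner x) hmap).neg
    exact this.congr_deriv (by ring)
  have hMF : ∀ x ∈ Icc a b, |f'' (a + b - x)| ≤ M := fun x hx => hM _ (hmap hx)
  have key := taylor1_fwd hd1F hd2F hMF (a + b - y) (hmap hy)
  have e1 : a + b - (a + b - y) = y := by ring
  have e2 : a + b - a = b := by ring
  rw [e1, e2] at key
  have e3 : f y - f b - f' b * (y - b) = f y - f b - -f' b * (a + b - y - a) := by ring
  have e4 : (y - b) ^ 2 = (a + b - y - a) ^ 2 := by ring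
  rw [e3, e4]
  exact key

/-- **Claim 1 (paper).** With `I = uIcc η₀ η₁`, `μ` twice continuously differentiable on `I`
with `μ' > 0` and `|μ''| ≤ M` on `I`, `e ∈ [0,1]`,
`a = e μ'(η₁) / (e μ'(η₁) + (1−e) μ'(η₀))` and `ν = a η₁ + (1−a) η₀`, one has
`|e μ(η₁) + (1−e) μ(η₀) − μ(ν)| ≤ (M/2) (η₁ − η₀)²`. -/
theorem dina_claim1_conditional_mean
    (η₀ η₁ e M a ν : ℝ) (μ μ' μ'' : ℝ → ℝ)
    (hd1 : ∀ x ∈ uIcc η₀ η₁, HasDerivWithinAt μ (μ' x) (uIcc η₀ η₁) x)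
    (hd2 : ∀ x ∈ uIcc η₀ η₁, HasDerivWithinAt μ' (μ'' x) (uIcc η₀ η₁) x)
    (hc : ContinuousOn μ'' (uIcc η₀ η₁))
    (hpos : ∀ x ∈ uIcc η₀ η₁, 0 < μ' x)
    (hM : ∀ x ∈ uIcc η₀ η₁, |μ'' x| ≤ M)
    (he : e ∈ Icc (0 : ℝ) 1)
    (ha : a = e * μ' η₁ / (e * μ' η₁ + (1 - e) * μ' η₀))
    (hν : ν = a * η₁ + (1 - a) * η₀) :
    |e * μ η₁ + (1 - e) * μ η₀ - μ ν| ≤ M / 2 * (η₁ - η₀) ^ 2 := by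
  have hη₁ : η₁ ∈ uIcc η₀ η₁ := right_mem_uIcc
  have hη₀ : η₀ ∈ uIcc η₀ η₁ := left_mem_uIcc
  have hV₁ := hpos _ hη₁
  have hV₀ := hpos _ hη₀
  have he0 := he.1
  have he1 := he.2
  have hD : 0 < e * μ' η₁ + (1 - e) * μ' η₀ := by
    rcases eq_or_lt_of_le he0 with h | h
    · rw [← h]; simpa using hV₀
    · nlinarith [mul_nonneg (sub_nonneg.mpr he1) hV₀.le, mul_pos h hV₁]
  have ha0 : 0 ≤ a := by
    rw [ha]; exact div_nonneg (mul_nonneg he0 hV₁.le) hD.le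
  have ha1 : a ≤ 1 := by
    rw [ha, div_le_one hD]
    nlinarith [mul_nonneg (sub_nonneg.mpr he1) hV₀.le]
  have hνmem : ν ∈ uIcc η₀ η₁ := by
    have := convex_uIcc η₀ η₁ hη₁ hη₀ ha0 (by linarith : (0:ℝ) ≤ 1 - a) (by ring)
    simpa [hν, smul_eq_mul] using this
  have haD : a * (e * μ' η₁ + (1 - e) * μ' η₀) = e * μ' η₁ := by
    rw [ha]; field_simp
  have hkey : e * μ' η₁ * (η₁ - ν) + (1 - e) * μ' η₀ * (η₀ - ν) = 0 := by
    linear_combination (η₀ - η₁) * haD - (e * μ' η₁ + (1 - e) * μ' η₀) * hν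
  obtain ⟨hR1, hR0⟩ :
      |μ ν - μ η₁ - μ' η₁ * (ν - η₁)| ≤ M / 2 * (ν - η₁) ^ 2 ∧
      |μ ν - μ η₀ - μ' η₀ * (ν - η₀)| ≤ M / 2 * (ν - η₀) ^ 2 := by
    rcases le_total η₀ η₁ with h | h
    · rw [uIcc_of_le h] at hd1 hd2 hM hνmem
      exact ⟨taylor1_bwd hd1 hd2 hM ν hνmem, taylor1_fwd hd1 hd2 hM ν hνmem⟩
    · rw [uIcc_of_ge h] at hd1 hd2 hM hνmem
      exact ⟨taylor1_fwd hd1 hd2 hM ν hνmem, taylor1_bwd hd1 hd2 hM ν hνmem⟩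
  have hM0 : 0 ≤ M := le_trans (abs_nonneg _) (hM η₀ hη₀)
  have hν1 : ν - η₁ = (a - 1) * (η₁ - η₀) := by rw [hν]; ring
  have hν0 : ν - η₀ = a * (η₁ - η₀) := by rw [hν]; ring
  have h1 : (ν - η₁) ^ 2 ≤ (η₁ - η₀) ^ 2 := by
    rw [hν1]
    nlinarith [mul_nonneg (mul_nonneg ha0 (by linarith : (0:ℝ) ≤ 2 - a)) (sq_nonneg (η₁ - η₀))]
  have h0 : (ν - η₀) ^ 2 ≤ (η₁ - η₀) ^ 2 := by
    rw [hν0]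
    nlinarith [mul_nonneg (mul_nonneg (by linarith : (0:ℝ) ≤ 1 - a) (by linarith : (0:ℝ) ≤ 1 + a))
      (sq_nonneg (η₁ - η₀))]
  have hA : M / 2 * (ν - η₁) ^ 2 ≤ M / 2 * (η₁ - η₀) ^ 2 :=
    mul_le_mul_of_nonneg_left h1 (by linarith)
  have hB : M / 2 * (ν - η₀) ^ 2 ≤ M / 2 * (η₁ - η₀) ^ 2 :=
    mul_le_mul_of_nonneg_left h0 (by linarith)
  have hsum : e * μ η₁ + (1 - e) * μ η₀ - μ ν =
      -(e * (μ ν - μ η₁ - μ' η₁ * (ν - η₁)) + (1 - e) * (μ ν - μ η₀ - μ' η₀ * (ν - η₀))) := by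
    linear_combination hkey
  rw [hsum, abs_neg]
  calc |e * (μ ν - μ η₁ - μ' η₁ * (ν - η₁)) + (1 - e) * (μ ν - μ η₀ - μ' η₀ * (ν - η₀))|
      ≤ |e * (μ ν - μ η₁ - μ' η₁ * (ν - η₁))| + |(1 - e) * (μ ν - μ η₀ - μ' η₀ * (ν - η₀))| :=
        abs_add_le _ _
    _ = e * |μ ν - μ η₁ - μ' η₁ * (ν - η₁)| + (1 - e) * |μ ν - μ η₀ - μ' η₀ * (ν - η₀)| := by
        rw [abs_mul, abs_mul, abs_of_nonneg he0, abs_of_nonneg (by linarith : (0:ℝ) ≤ 1 - e)]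
    _ ≤ e * (M / 2 * (ν - η₁) ^ 2) + (1 - e) * (M / 2 * (ν - η₀) ^ 2) :=
        add_le_add (mul_le_mul_of_nonneg_left hR1 he0)
          (mul_le_mul_of_nonneg_left hR0 (by linarith))
    _ ≤ e * (M / 2 * (η₁ - η₀) ^ 2) + (1 - e) * (M / 2 * (η₁ - η₀) ^ 2) :=
        add_le_add (mul_le_mul_of_nonneg_left hA he0)
          (mul_le_mul_of_nonneg_left hB (by linarith))
    _ = M / 2 * (η₁ - η₀) ^ 2 := by ring
end

section
/- Let (Ω, 𝒜, P) be a probability space, E a measurable space, X : Ω → E measurable, and W : Ω → {0,1} measurable. Let e : E → [0,1], η₀ : E → ℝ, η₁ : E → ℝ be bounded measurable functions, and let ψ : ℝ → ℝ be twice continuously differentiable with ψ″ > 0. Assume that for every bounded measurable f : E → ℝ, E[W·f(X)] = E[e(X)·f(X)] (i.e., e(X) is a version of P(W = 1 | X)). Define V_w(x) := ψ″(η_w(x)) for w ∈ {0,1}, a(x) := e(x)·V₁(x) / (e(x)·V₁(x) + (1−e(x))·V₀(x)), and η_W(ω) := η_{W(ω)}(X(ω)). Then for every bounded measurable g : E →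 ℝ, E[ ψ″(η_W) · (W − a(X)) · g(X) ] = 0. (This is the core of the paper's Claim A.3: the exponential-family score with the modified propensity a(x) is Neyman-orthogonal to perturbations of the baseline ν.) -/
open MeasureTheory Set

/-- **Claim A.3 core (paper).** In the exponential family with cumulant `ψ` (so that the
variance functions are `V_w(x) = ψ''(η_w(x))`), if `e(X)` is a version of `P(W = 1 | X)`
and `a(x) = e(x)V₁(x)/(e(x)V₁(x) + (1−e(x))V₀(x))`, then for every bounded measurable `g`,
`E[ψ''(η_W)·(W − a(X))·g(X)] = 0`. -/
theorem dina_score_orthogonality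
    {Ω E : Type*} [MeasurableSpace Ω] [MeasurableSpace E]
    (P : Measure Ω) [IsProbabilityMeasure P]
    (X : Ω → E) (hX : Measurable X)
    (W : Ω → ℝ) (hW : Measurable W) (hW01 : ∀ ω, W ω = 0 ∨ W ω = 1)
    (e η₀ η₁ : E → ℝ)
    (hem : Measurable e) (heb : ∀ x, e x ∈ Icc (0 : ℝ) 1)
    (hη₀m : Measurable η₀) (hη₀b : ∃ C, ∀ x, |η₀ x| ≤ C)
    (hη₁m : Measurable η₁) (hη₁b : ∃ C, ∀ x, |η₁ x| ≤ C)
    (ψ : ℝ → ℝ) (hψ : ContDiff ℝ 2 ψ) (hψpos : ∀ t, 0 < deriv (deriv ψ) t)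
    (hprop : ∀ f : E → ℝ, Measurable f → (∃ C, ∀ x, |f x| ≤ C) →
      ∫ ω, W ω * f (X ω) ∂P = ∫ ω, e (X ω) * f (X ω) ∂P) :
    ∀ g : E → ℝ, Measurable g → (∃ C, ∀ x, |g x| ≤ C) →
      ∫ ω, deriv (deriv ψ) (if W ω = 1 then η₁ (X ω) else η₀ (X ω)) *
        (W ω - e (X ω) * deriv (deriv ψ) (η₁ (X ω)) /
          (e (X ω) * deriv (deriv ψ) (η₁ (X ω))
            + (1 - e (X ω)) * deriv (deriv ψ) (η₀ (X ω)))) *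
        g (X ω) ∂P = 0 := by
  intro g hgm hgb
  -- continuity of ψ''
  have hψ2 : Continuous (deriv (deriv ψ)) := by
    have h2 : ContDiff ℝ (1 + 1) ψ := by norm_num; exact hψ
    have h1 : ContDiff ℝ 1 (deriv ψ) := (contDiff_succ_iff_deriv.mp h2).2.2
    exact h1.continuous_deriv le_rfl
  set ψ'' := deriv (deriv ψ) with hψ''def
  set V₀ : E → ℝ := fun x => ψ'' (η₀ x) with hV₀def
  set V₁ : E → ℝ := fun x => ψ'' (η₁ x) with hV₁def
  set D : E → ℝ := fun x => e x * V₁ x + (1 - e x) * V₀ x with hDdef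
  set a : E → ℝ := fun x => e x * V₁ x / D x with hadef
  have hV₀pos : ∀ x, 0 < V₀ x := fun x => hψpos _
  have hV₁pos : ∀ x, 0 < V₁ x := fun x => hψpos _
  have hDpos : ∀ x, 0 < D x := by
    intro x
    have h0 := hV₀pos x
    have h1 := hV₁pos x
    have he := heb x
    simp only [mem_Icc] at he
    simp only [hDdef]
    rcases le_total (V₀ x) (V₁ x) with hle | hle
    · nlinarith [mul_nonneg he.1 (sub_nonneg.mpr hle)]
    · nlinarith [mul_nonneg (sub_nonneg.mpr he.2) (sub_nonneg.mpr hle)]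
  have ha01 : ∀ x, 0 ≤ a x ∧ a x ≤ 1 := by
    intro x
    have he := heb x
    simp only [mem_Icc] at he
    constructor
    · exact div_nonneg (mul_nonneg he.1 (hV₁pos x).le) (hDpos x).le
    · rw [div_le_one (hDpos x)]
      have : 0 ≤ (1 - e x) * V₀ x := mul_nonneg (by linarith [he.2]) (hV₀pos x).le
      simp only [hDdef]; linarith
  -- bounds on V₀, V₁
  obtain ⟨C₀, hC₀⟩ := hη₀b
  obtain ⟨C₁, hC₁⟩ := hη₁b
  have hbd : ∀ (C : ℝ) (η : E → ℝ), (∀ x, |η x| ≤ C) →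
      ∃ M, ∀ x, |ψ'' (η x)| ≤ M := by
    intro C η hη
    obtain ⟨M, hM⟩ := (isCompact_Icc (a := -C) (b := C)).exists_bound_of_continuousOn
      hψ2.continuousOn
    exact ⟨M, fun x => by
      have := hM (η x) (abs_le.mp (hη x))
      simpa using this⟩
  obtain ⟨M₀, hM₀⟩ := hbd C₀ η₀ hC₀
  obtain ⟨M₁, hM₁⟩ := hbd C₁ η₁ hC₁
  obtain ⟨Cg, hCg⟩ := hgb
  -- measurability
  have hV₀m : Measurable V₀ := hψ2.measurable.comp hη₀m
  have hV₁m : Measurable V₁ := hψ2.measurable.comp hη₁m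
  have hDm : Measurable D := by
    apply Measurable.add
    · exact hem.mul hV₁m
    · exact (measurable_const.sub hem).mul hV₀m
  have ham : Measurable a := (hem.mul hV₁m).div hDm
  -- helper: integrability of bounded measurable functions of X, times W or not
  have hint : ∀ (h : E → ℝ), Measurable h → (∃ C, ∀ x, |h x| ≤ C) →
      Integrable (fun ω => h (X ω)) P ∧ Integrable (fun ω => W ω * h (X ω)) P := by
    intro h hm ⟨C, hC⟩
    have hmeas : Measurable fun ω => h (X ω) := hm.comp hX
    have h1 : Integrable (fun ω => h (X ω)) P := by
      apply Integrable.mono' (integrable_const C) hmeas.aestronglyMeasurable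
      exact Filter.Eventually.of_forall fun ω => by simpa using hC (X ω)
    refine ⟨h1, ?_⟩
    apply Integrable.mono' (integrable_const C) (hW.mul hmeas).aestronglyMeasurable
    apply Filter.Eventually.of_forall
    intro ω
    have hw : |W ω| ≤ 1 := by rcases hW01 ω with h | h <;> simp [h]
    calc ‖W ω * h (X ω)‖ = |W ω| * |h (X ω)| := abs_mul _ _
      _ ≤ 1 * C := mul_le_mul hw (hC _) (abs_nonneg _) zero_le_one
      _ = C := one_mul C
  -- the key functions
  set f : E → ℝ := fun x => (V₁ x * (1 - a x) + a x * V₀ x) * g x with hfdef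
  set h₂ : E → ℝ := fun x => a x * V₀ x * g x with hh₂def
  have hfm : Measurable f := ((hV₁m.mul (measurable_const.sub ham)).add
    (ham.mul hV₀m)).mul hgm
  have hfb : ∃ C, ∀ x, |f x| ≤ C := by
    refine ⟨(|M₁| * 2 + |M₀|) * Cg, fun x => ?_⟩
    have h1 := hM₁ x
    have h0 := hM₀ x
    have hg := hCg x
    have ha := ha01 x
    have hga : (0:ℝ) ≤ Cg := le_trans (abs_nonneg _) hg
    calc |f x| = |V₁ x * (1 - a x) + a x * V₀ x| * |g x| := abs_mul _ _
      _ ≤ (|V₁ x * (1 - a x)| + |a x * V₀ x|) * Cg := by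
          apply mul_le_mul (abs_add_le _ _) hg (abs_nonneg _)
          positivity
      _ ≤ (|M₁| * 2 + |M₀|) * Cg := by
          apply mul_le_mul_of_nonneg_right _ hga
          rw [abs_mul, abs_mul]
          have h1a : |V₁ x| ≤ |M₁| := le_trans h1 (le_abs_self _)
          have h0a : |V₀ x| ≤ |M₀| := le_trans h0 (le_abs_self _)
          have haa : |a x| ≤ 1 := abs_le.mpr ⟨by linarith [ha.1], ha.2⟩
          have h1ma : |1 - a x| ≤ 2 := abs_le.mpr ⟨by linarith [ha.2], by linarith [ha.1]⟩
          nlinarith [abs_nonneg (V₁ x), abs_nonneg (V₀ x), abs_nonneg (a x), abs_nonneg (1 - a x)]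
  have hh₂m : Measurable h₂ := (ham.mul hV₀m).mul hgm
  have hh₂b : ∃ C, ∀ x, |h₂ x| ≤ C := by
    refine ⟨|M₀| * Cg, fun x => ?_⟩
    have h0 := hM₀ x
    have hg := hCg x
    have ha := ha01 x
    have haa : |a x| ≤ 1 := abs_le.mpr ⟨by linarith [ha.1], ha.2⟩
    calc |h₂ x| = |a x| * |V₀ x| * |g x| := by rw [abs_mul, abs_mul]
      _ ≤ 1 * |M₀| * Cg := by
          apply mul_le_mul _ hg (abs_nonneg _) (by positivity)
          apply mul_le_mul haa (le_trans h0 (le_abs_self _)) (abs_nonneg _) zero_le_one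
      _ = |M₀| * Cg := by ring
  -- pointwise identity
  have hpt : ∀ ω, ψ'' (if W ω = 1 then η₁ (X ω) else η₀ (X ω)) *
      (W ω - a (X ω)) * g (X ω) = W ω * f (X ω) - h₂ (X ω) := by
    intro ω
    rcases hW01 ω with h | h
    · rw [h, if_neg (by norm_num : ¬(0:ℝ) = 1)]
      simp only [hfdef, hh₂def]
      ring
    · rw [h, if_pos rfl]
      simp only [hfdef, hh₂def]
      ring
  have heq : (fun ω => ψ'' (if W ω = 1 then η₁ (X ω) else η₀ (X ω)) *
      (W ω - e (X ω) * ψ'' (η₁ (X ω)) /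
          (e (X ω) * ψ'' (η₁ (X ω)) + (1 - e (X ω)) * ψ'' (η₀ (X ω)))) * g (X ω)) =
      fun ω => W ω * f (X ω) - h₂ (X ω) := by
    funext ω
    exact hpt ω
  rw [heq]
  obtain ⟨hfint, hWfint⟩ := hint f hfm hfb
  obtain ⟨hh₂int, -⟩ := hint h₂ hh₂m hh₂b
  rw [integral_sub hWfint hh₂int, hprop f hfm hfb]
  obtain ⟨hefint, -⟩ := hint (fun x => e x * f x) (hem.mul hfm)
    (by obtain ⟨C, hC⟩ := hfb; exact ⟨C, fun x => by
      have he := heb x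
      simp only [mem_Icc] at he
      calc |e x * f x| = |e x| * |f x| := abs_mul _ _
        _ ≤ 1 * C := mul_le_mul (abs_le.mpr ⟨by linarith [he.1], he.2⟩) (hC x)
            (abs_nonneg _) zero_le_one
        _ = C := one_mul C⟩)
  have : ∀ x, e x * f x = h₂ x := by
    intro x
    simp only [hfdef, hh₂def, hadef]
    have hD := hDpos x
    field_simp
    ring
  have heq2 : (fun ω => e (X ω) * f (X ω)) = fun ω => h₂ (X ω) := by
    funext ω; exact this (X ω)
  rw [heq2, sub_self]
end

section
/- Let Y and C be independent nonnegative real-valued random variables on a probability space (Ω, P). Let λ : [0,∞) → [0,∞) be measurable and locally integrable, define Λ(y) := ∫₀^y λ(t) dt, let η ∈ ℝ, and suppose P(Y > y) = exp(−Λ(y)·exp(η)) for every y ≥ 0 with Y real-valued (so Λ(y) → ∞ as y → ∞). Then E[Λ(min(Y, C))] = exp(−η) · P(C ≥ Y). (Second identity of the paper's Lemma A.4: the expected cumulative hazard at the censored survival time equals exp(−η) times the probability of not being censored.) -/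
open MeasureTheory Set

namespace DinaA4
variable {lam : ℝ → ℝ} {Λ : ℝ → ℝ}

lemma lamW (hlnn : ∀ t ≥ (0:ℝ), 0 ≤ lam t)
    (hloc : ∀ y : ℝ, IntervalIntegrable lam volume 0 y)
    (hΛ : ∀ y, Λ y = ∫ t in (0:ℝ)..y, lam t) {s : ℝ} (hs : 0 ≤ s) :
    ∫⁻ t in Ioc 0 s, ENNReal.ofReal (lam t) = ENNReal.ofReal (Λ s) := by
  rw [hΛ s, intervalIntegral.integral_of_le hs]
  exact (ofReal_integral_eq_lintegral_ofReal (hloc s).1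
    ((ae_restrict_iff' measurableSet_Ioc).2 (ae_of_all _ fun t ht => hlnn t ht.1.le))).symm

lemma lamMono (hlnn : ∀ t ≥ (0:ℝ), 0 ≤ lam t)
    (hloc : ∀ y : ℝ, IntervalIntegrable lam volume 0 y)
    (hΛ : ∀ y, Λ y = ∫ t in (0:ℝ)..y, lam t) : MonotoneOn Λ (Ici 0) := by
  intro s hs t _ hst
  have h1 : Λ t - Λ s = ∫ u in s..t, lam u := by
    rw [hΛ, hΛ, intervalIntegral.integral_interval_sub_left (hloc t) (hloc s)]
  have h2 : 0 ≤ ∫ u in s..t, lam u :=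
    intervalIntegral.integral_nonneg hst (fun u hu => hlnn u (le_trans hs hu.1))
  linarith

lemma lamZero (hΛ : ∀ y, Λ y = ∫ t in (0:ℝ)..y, lam t) : Λ 0 = 0 := by
  rw [hΛ 0, intervalIntegral.integral_same]

lemma lamCont (hloc : ∀ y : ℝ, IntervalIntegrable lam volume 0 y)
    (hΛ : ∀ y, Λ y = ∫ t in (0:ℝ)..y, lam t) : Continuous Λ := by
  have : Λ = fun y => ∫ t in (0:ℝ)..y, lam t := funext hΛ
  rw [this]
  exact intervalIntegral.continuous_primitive (fun a b => ((hloc a).symm.trans (hloc b))) 0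

lemma lamNN (hlnn : ∀ t ≥ (0:ℝ), 0 ≤ lam t)
    (hloc : ∀ y : ℝ, IntervalIntegrable lam volume 0 y)
    (hΛ : ∀ y, Λ y = ∫ t in (0:ℝ)..y, lam t) {s : ℝ} (hs : 0 ≤ s) : 0 ≤ Λ s := by
  have := lamMono hlnn hloc hΛ (self_mem_Ici) hs hs
  rw [lamZero hΛ] at this; exact this

lemma crux (hlm : Measurable lam) (hlnn : ∀ t ≥ (0:ℝ), 0 ≤ lam t)
    (hloc : ∀ y : ℝ, IntervalIntegrable lam volume 0 y)
    (hΛ : ∀ y, Λ y = ∫ t in (0:ℝ)..y, lam t)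
    {a : ℝ} (ha : 0 < a) {c : ℝ} (hc : 0 ≤ c) :
    ∫⁻ t in Ioc 0 c, ENNReal.ofReal (lam t) * ENNReal.ofReal (a * Real.exp (-(Λ t * a)))
      = ENNReal.ofReal (1 - Real.exp (-(Λ c * a))) := by
  have hΛc : Continuous Λ := lamCont hloc hΛ
  have hΛm : Measurable Λ := hΛc.measurable
  set w : ℝ → ENNReal := fun t => ENNReal.ofReal (lam t) with hwdef
  have hwm : Measurable w := ENNReal.measurable_ofReal.comp hlm
  have hgc : Continuous fun u : ℝ => a * Real.exp (-(u * a)) := by continuity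
  set φ : ℝ → ENNReal := fun u => ENNReal.ofReal (a * Real.exp (-(u * a))) with hφdef
  have hφm : Measurable φ := ENNReal.measurable_ofReal.comp hgc.measurable
  set ν : Measure ℝ := (volume.restrict (Ioc 0 c)).withDensity w with hνdef
  have hνfin : IsFiniteMeasure ν := by
    refine isFiniteMeasure_withDensity ?_
    rw [lamW hlnn hloc hΛ hc]
    exact ENNReal.ofReal_ne_top
  have hmapfin : IsFiniteMeasure (ν.map Λ) := Measure.isFiniteMeasure_map ν Λ
  have hmap : ν.map Λ = volume.restrict (Ioc 0 (Λ c)) := by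
    refine Measure.ext_of_Iic (ν.map Λ) _ (fun u => ?_)
    rw [Measure.map_apply hΛm measurableSet_Iic, Measure.restrict_apply measurableSet_Iic,
      hνdef, withDensity_apply _ (hΛm measurableSet_Iic),
      Measure.restrict_restrict (hΛm measurableSet_Iic)]
    rcases lt_or_ge u 0 with hu | hu
    · have h1 : Λ ⁻¹' Iic u ∩ Ioc 0 c = ∅ := by
        ext t
        simp only [mem_inter_iff, mem_preimage, mem_Iic, mem_Ioc, mem_empty_iff_false, iff_false]
        rintro ⟨h1, h2, _⟩
        exact absurd (le_trans (lamNN hlnn hloc hΛ h2.le) h1) (not_le.2 hu)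
      have h2 : Iic u ∩ Ioc 0 (Λ c) = ∅ := by
        ext x
        simp only [mem_inter_iff, mem_Iic, mem_Ioc, mem_empty_iff_false, iff_false]
        rintro ⟨h1, h2, _⟩
        exact absurd (le_trans h2.le h1) (not_le.2 hu)
      simp [h1, h2]
    · set T : Set ℝ := Icc 0 c ∩ Λ ⁻¹' Iic u with hTdef
      have hT_ne : T.Nonempty := ⟨0, ⟨le_refl 0, hc⟩, by
        simp only [mem_preimage, mem_Iic, lamZero hΛ]; exact hu⟩
      have hT_cpt : IsCompact T := isCompact_Icc.inter_right (isClosed_Iic.preimage hΛc)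
      set t₀ := sSup T with ht₀def
      have ht₀ : t₀ ∈ T := hT_cpt.sSup_mem hT_ne
      have hkey : Λ ⁻¹' Iic u ∩ Ioc 0 c = Ioc 0 t₀ := by
        ext t
        constructor
        · rintro ⟨h1, h2⟩
          exact ⟨h2.1, le_csSup hT_cpt.bddAbove ⟨⟨h2.1.le, h2.2⟩, h1⟩⟩
        · rintro ⟨h1, h2⟩
          have htc : t ≤ c := h2.trans ht₀.1.2
          have hmono : Λ t ≤ Λ t₀ :=
            lamMono hlnn hloc hΛ h1.le ht₀.1.1 h2
          exact ⟨hmono.trans ht₀.2, h1, htc⟩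
      have ht₀u : Λ t₀ = min u (Λ c) := by
        rcases le_or_gt (Λ c) u with h | h
        · have hcT : c ∈ T := ⟨⟨hc, le_refl c⟩, h⟩
          have : t₀ = c := le_antisymm ht₀.1.2 (le_csSup hT_cpt.bddAbove hcT)
          rw [this, min_eq_right h]
        · rw [min_eq_left h.le]
          refine le_antisymm ht₀.2 ?_
          by_contra hlt
          push_neg at hlt
          have ht₀c : t₀ < c :=
            lt_of_le_of_ne ht₀.1.2 (fun he => absurd (he ▸ ht₀.2) (not_le.2 h))
          have hev : ∀ᶠ t in nhds t₀, Λ t < u :=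
            hΛc.continuousAt.eventually_lt continuousAt_const hlt
          obtain ⟨δ, hδ, hball⟩ := Metric.eventually_nhds_iff.1 hev
          set t := min c (t₀ + δ / 2) with htdef
          have h1 : t₀ < t := lt_min ht₀c (by linarith)
          have h2 : dist t t₀ < δ := by
            rw [Real.dist_eq, abs_of_pos (sub_pos.2 h1)]
            have := min_le_right c (t₀ + δ / 2)
            linarith
          have hmem : t ∈ T := ⟨⟨le_trans ht₀.1.1 h1.le, min_le_left _ _⟩, (hball h2).le⟩
          exact absurd (le_csSup hT_cpt.bddAbove hmem) (not_le.2 h1)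
      have hIic : Iic u ∩ Ioc 0 (Λ c) = Ioc 0 (min u (Λ c)) := by
        ext x
        simp only [mem_inter_iff, mem_Iic, mem_Ioc, lt_min_iff, le_min_iff]
        tauto
      rw [hkey, lamW hlnn hloc hΛ ht₀.1.1, hIic, Real.volume_Ioc, sub_zero, ht₀u]
  have hint : IntegrableOn (fun u => a * Real.exp (-(u * a))) (Ioc 0 (Λ c)) volume :=
    hgc.integrableOn_Ioc
  have hftc : ∫ u in Ioc 0 (Λ c), a * Real.exp (-(u * a)) = 1 - Real.exp (-(Λ c * a)) := by
    rw [← intervalIntegral.integral_of_le (lamNN hlnn hloc hΛ hc)]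
    have hderiv : ∀ u ∈ uIcc (0:ℝ) (Λ c),
        HasDerivAt (fun v : ℝ => -Real.exp (-(v * a))) (a * Real.exp (-(u * a))) u := by
      intro u _
      have h1 : HasDerivAt (fun v : ℝ => -(v * a)) (-a) u := (hasDerivAt_mul_const a).neg
      have h2 := (Real.hasDerivAt_exp (-(u * a))).comp u h1
      have h3 : HasDerivAt (fun v : ℝ => -Real.exp (-(v * a))) (-(Real.exp (-(u * a)) * -a)) u := h2.neg
      convert h3 using 1
      ring
    rw [intervalIntegral.integral_eq_sub_of_hasDerivAt hderiv
      (hgc.intervalIntegrable 0 (Λ c))]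
    simp [Real.exp_zero]
    ring
  calc ∫⁻ t in Ioc 0 c, w t * φ (Λ t)
      = ∫⁻ t, φ (Λ t) ∂ν := by
        rw [hνdef, lintegral_withDensity_eq_lintegral_mul _ hwm
          (show Measurable fun t => φ (Λ t) from hφm.comp hΛm)]
        rfl
    _ = ∫⁻ u, φ u ∂(ν.map Λ) := (lintegral_map hφm hΛm).symm
    _ = ∫⁻ u in Ioc 0 (Λ c), φ u := by rw [hmap]
    _ = ENNReal.ofReal (∫ u in Ioc 0 (Λ c), a * Real.exp (-(u * a))) :=
        (ofReal_integral_eq_lintegral_ofReal hint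
          (ae_of_all _ fun u => mul_nonneg ha.le (Real.exp_pos _).le)).symm
    _ = ENNReal.ofReal (1 - Real.exp (-(Λ c * a))) := by rw [hftc]

end DinaA4

/-- **Lemma A.4, second identity (paper).** With `Y ⟂ C`, `Λ(y) = ∫₀^y λ(t) dt`, and
`Y` having survival function `exp(−Λ(y)·exp(η))` (so `Λ(y) → ∞`), the expected cumulative
hazard at the censored survival time satisfies `E[Λ(min(Y,C))] = exp(−η)·P(C ≥ Y)`. -/
theorem dina_lemmaA4_expected_cumulative_hazard
    {Ω : Type*} [MeasurableSpace Ω] (P : Measure Ω) [IsProbabilityMeasure P]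
    (Y C : Ω → ℝ) (hY : Measurable Y) (hC : Measurable C)
    (hYnn : ∀ ω, 0 ≤ Y ω) (hCnn : ∀ ω, 0 ≤ C ω)
    (hind : ProbabilityTheory.IndepFun Y C P)
    (lam : ℝ → ℝ) (hlm : Measurable lam) (hlnn : ∀ t ≥ (0 : ℝ), 0 ≤ lam t)
    (hloc : ∀ y : ℝ, IntervalIntegrable lam MeasureTheory.volume 0 y)
    (Λ : ℝ → ℝ) (hΛ : ∀ y, Λ y = ∫ t in (0 : ℝ)..y, lam t)
    (η : ℝ)
    (hsurv : ∀ y ≥ (0 : ℝ),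
      P {ω | Y ω > y} = ENNReal.ofReal (Real.exp (-(Λ y * Real.exp η))))
    (hΛtop : Filter.Tendsto Λ Filter.atTop Filter.atTop) :
    ∫ ω, Λ (min (Y ω) (C ω)) ∂P = Real.exp (-η) * (P {ω | C ω ≥ Y ω}).toReal := by
  have ha : (0:ℝ) < Real.exp η := Real.exp_pos η
  set a := Real.exp η with hadef
  have hΛc : Continuous Λ := DinaA4.lamCont hloc hΛ
  have hΛm : Measurable Λ := hΛc.measurable
  set w : ℝ → ENNReal := fun t => ENNReal.ofReal (lam t) with hwdef
  have hwm : Measurable w := ENNReal.measurable_ofReal.comp hlm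
  set μC : Measure ℝ := P.map C with hμCdef
  set μY : Measure ℝ := P.map Y with hμYdef
  have hμYprob : IsProbabilityMeasure μY := Measure.isProbabilityMeasure_map hY.aemeasurable
  have hμCprob : IsProbabilityMeasure μC := Measure.isProbabilityMeasure_map hC.aemeasurable
  -- pointwise layer cake
  have hC1 : ∀ m : ℝ, 0 ≤ m → ENNReal.ofReal (Λ m) = ∫⁻ t in Ioo 0 m, w t := by
    intro m hm
    rw [hΛ m, intervalIntegral.integral_of_le hm, integral_Ioc_eq_integral_Ioo]
    exact ofReal_integral_eq_lintegral_ofReal ((hloc m).1.mono_set Ioo_subset_Ioc_self)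
      ((ae_restrict_iff' measurableSet_Ioo).2 (ae_of_all _ fun t ht => hlnn t ht.1.le))
  -- set S and F for first Tonelli
  set S : Set (Ω × ℝ) := {p | 0 < p.2 ∧ p.2 < Y p.1 ∧ p.2 < C p.1} with hSdef
  have hSm : MeasurableSet S := by
    have h1 : MeasurableSet {p : Ω × ℝ | 0 < p.2} :=
      measurableSet_lt measurable_const measurable_snd
    have h2 : MeasurableSet {p : Ω × ℝ | p.2 < Y p.1} :=
      measurableSet_lt measurable_snd (hY.comp measurable_fst)
    have h3 : MeasurableSet {p : Ω × ℝ | p.2 < C p.1} :=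
      measurableSet_lt measurable_snd (hC.comp measurable_fst)
    exact h1.inter (h2.inter h3)
  set F : Ω × ℝ → ENNReal := S.indicator (fun p => w p.2) with hFdef
  have hFm : Measurable F := (hwm.comp measurable_snd).indicator hSm
  have hswap : ∫⁻ ω, ∫⁻ t, F (ω, t) ∂volume ∂P = ∫⁻ t, ∫⁻ ω, F (ω, t) ∂P ∂volume :=
    lintegral_lintegral_swap hFm.aemeasurable
  have hinner : ∀ ω, ∫⁻ t, F (ω, t) ∂volume = ENNReal.ofReal (Λ (min (Y ω) (C ω))) := by
    intro ω
    have h1 : (fun t => F (ω, t)) = (Ioo 0 (min (Y ω) (C ω))).indicator w := by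
      funext t
      by_cases h : 0 < t ∧ t < Y ω ∧ t < C ω
      · rw [hFdef, indicator_of_mem (show (ω, t) ∈ S from h),
          indicator_of_mem (show t ∈ Ioo 0 (min (Y ω) (C ω)) from ⟨h.1, lt_min h.2.1 h.2.2⟩)]
      · rw [hFdef, indicator_of_notMem (show (ω, t) ∉ S from h), indicator_of_notMem]
        intro hmem
        exact h ⟨hmem.1, (lt_min_iff.1 hmem.2).1, (lt_min_iff.1 hmem.2).2⟩
    rw [h1, lintegral_indicator measurableSet_Ioo, ← hC1 _ (le_min (hYnn ω) (hCnn ω))]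
  have hmul : ∀ t : ℝ, 0 < t → P {ω | t < Y ω ∧ t < C ω}
      = ENNReal.ofReal (Real.exp (-(Λ t * a))) * μC (Ioi t) := by
    intro t ht
    have h1 : {ω | t < Y ω ∧ t < C ω} = Y ⁻¹' (Ioi t) ∩ C ⁻¹' (Ioi t) := rfl
    rw [h1, hind.measure_inter_preimage_eq_mul _ _ measurableSet_Ioi measurableSet_Ioi]
    congr 1
    · exact hsurv t ht.le
    · rw [hμCdef, Measure.map_apply hC measurableSet_Ioi]
  have houter : ∀ t : ℝ, ∫⁻ ω, F (ω, t) ∂P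
      = (Ioi (0:ℝ)).indicator
          (fun s => w s * (ENNReal.ofReal (Real.exp (-(Λ s * a))) * μC (Ioi s))) t := by
    intro t
    by_cases ht : 0 < t
    · have h1 : (fun ω => F (ω, t)) = ({ω | t < Y ω ∧ t < C ω}).indicator (fun _ => w t) := by
        funext ω
        by_cases h : t < Y ω ∧ t < C ω
        · rw [hFdef, indicator_of_mem (show (ω, t) ∈ S from ⟨ht, h.1, h.2⟩),
            indicator_of_mem (show ω ∈ {ω | t < Y ω ∧ t < C ω} from h)]
        · rw [hFdef, indicator_of_notMem (show (ω, t) ∉ S from fun hmem => h ⟨hmem.2.1, hmem.2.2⟩),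
            indicator_of_notMem (show ω ∉ {ω | t < Y ω ∧ t < C ω} from h)]
      have hms : MeasurableSet {ω | t < Y ω ∧ t < C ω} :=
        (measurableSet_lt measurable_const hY).inter (measurableSet_lt measurable_const hC)
      rw [h1, lintegral_indicator hms, setLIntegral_const, indicator_of_mem (show t ∈ Ioi (0:ℝ) from ht),
        hmul t ht]
    · have h1 : (fun ω => F (ω, t)) = fun _ => 0 := by
        funext ω
        exact indicator_of_notMem (fun hmem => ht hmem.1) _
      rw [h1, lintegral_const, zero_mul, indicator_of_notMem (show t ∉ Ioi (0:ℝ) from ht)]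
  set I : ENNReal := ∫⁻ t in Ioi (0:ℝ),
      w t * (ENNReal.ofReal (Real.exp (-(Λ t * a))) * μC (Ioi t)) with hIdef
  have hLHS : ∫⁻ ω, ENNReal.ofReal (Λ (min (Y ω) (C ω))) ∂P = I := by
    calc ∫⁻ ω, ENNReal.ofReal (Λ (min (Y ω) (C ω))) ∂P
        = ∫⁻ ω, ∫⁻ t, F (ω, t) ∂volume ∂P := by
          refine lintegral_congr fun ω => (hinner ω).symm
      _ = ∫⁻ t, ∫⁻ ω, F (ω, t) ∂P ∂volume := hswap
      _ = ∫⁻ t, (Ioi (0:ℝ)).indicator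
            (fun s => w s * (ENNReal.ofReal (Real.exp (-(Λ s * a))) * μC (Ioi s))) t ∂volume :=
          lintegral_congr houter
      _ = I := by rw [lintegral_indicator measurableSet_Ioi]
  -- RHS
  have hpair : P.map (fun ω => (C ω, Y ω)) = μC.prod μY :=
    (ProbabilityTheory.indepFun_iff_map_prod_eq_prod_map_map hC.aemeasurable
      hY.aemeasurable).1 hind.symm
  have hPYC : P {ω | Y ω ≤ C ω} = ∫⁻ c, μY (Iic c) ∂μC := by
    have hms : MeasurableSet {p : ℝ × ℝ | p.2 ≤ p.1} :=
      measurableSet_le measurable_snd measurable_fst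
    have h1 : {ω | Y ω ≤ C ω} = (fun ω => (C ω, Y ω)) ⁻¹' {p : ℝ × ℝ | p.2 ≤ p.1} := rfl
    rw [h1, ← Measure.map_apply (hC.prodMk hY) hms, hpair, Measure.prod_apply hms]
    rfl
  set ψ : ℝ → ENNReal := fun t => w t * ENNReal.ofReal (a * Real.exp (-(Λ t * a))) with hψdef
  have hec : Continuous fun t : ℝ => Real.exp (-(Λ t * a)) :=
    Real.continuous_exp.comp ((hΛc.mul continuous_const).neg)
  have hψm : Measurable ψ :=
    hwm.mul (ENNReal.measurable_ofReal.comp (continuous_const.mul hec).measurable)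
  have hYIic : ∀ c : ℝ, μY (Iic c) = ∫⁻ t in Ioc 0 c, ψ t ∂volume := by
    intro c
    rcases le_or_gt 0 c with hc | hc
    · have h2 : μY (Ioi c) = ENNReal.ofReal (Real.exp (-(Λ c * a))) := by
        rw [hμYdef, Measure.map_apply hY measurableSet_Ioi]
        exact hsurv c hc
      have h3 : μY (Iic c) = 1 - μY (Ioi c) := by
        rw [← compl_Ioi, measure_compl measurableSet_Ioi (measure_ne_top _ _), measure_univ]
      have he1 : Real.exp (-(Λ c * a)) ≤ 1 :=
        Real.exp_le_one_iff.2 (neg_nonpos.2 (mul_nonneg (DinaA4.lamNN hlnn hloc hΛ hc) ha.le))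
      rw [h3, h2, hψdef, DinaA4.crux hlm hlnn hloc hΛ ha hc,
        ← ENNReal.ofReal_one, ← ENNReal.ofReal_sub _ (Real.exp_pos _).le]
    · have h1 : Y ⁻¹' (Iic c) = ∅ := by
        ext ω
        simp only [mem_preimage, mem_Iic, mem_empty_iff_false, iff_false, not_le]
        exact lt_of_lt_of_le hc (hYnn ω)
      rw [hμYdef, Measure.map_apply hY measurableSet_Iic, h1, measure_empty,
        Ioc_eq_empty (not_lt.2 hc.le), Measure.restrict_empty, lintegral_zero_measure]
  -- second Tonelli
  set G : ℝ × ℝ → ENNReal :=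
    ({p : ℝ × ℝ | 0 < p.2 ∧ p.2 ≤ p.1}).indicator (fun p => ψ p.2) with hGdef
  have hGsm : MeasurableSet {p : ℝ × ℝ | 0 < p.2 ∧ p.2 ≤ p.1} :=
    (measurableSet_lt measurable_const measurable_snd).inter
      (measurableSet_le measurable_snd measurable_fst)
  have hGm : Measurable G := (hψm.comp measurable_snd).indicator hGsm
  have hswap2 : ∫⁻ c, ∫⁻ t, G (c, t) ∂volume ∂μC = ∫⁻ t, ∫⁻ c, G (c, t) ∂μC ∂volume :=
    lintegral_lintegral_swap hGm.aemeasurable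
  have hG1 : ∀ c : ℝ, ∫⁻ t, G (c, t) ∂volume = ∫⁻ t in Ioc 0 c, ψ t ∂volume := by
    intro c
    have h1 : (fun t => G (c, t)) = (Ioc 0 c).indicator ψ := by
      funext t
      by_cases h : 0 < t ∧ t ≤ c
      · rw [hGdef, indicator_of_mem (show ((c, t) : ℝ × ℝ) ∈ {p : ℝ × ℝ | 0 < p.2 ∧ p.2 ≤ p.1} from h),
          indicator_of_mem (show t ∈ Ioc 0 c from h)]
      · rw [hGdef, indicator_of_notMem (show ((c, t) : ℝ × ℝ) ∉ {p : ℝ × ℝ | 0 < p.2 ∧ p.2 ≤ p.1} from h),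
          indicator_of_notMem (show t ∉ Ioc 0 c from h)]
    rw [h1, lintegral_indicator measurableSet_Ioc]
  have hG2 : ∀ t : ℝ, ∫⁻ c, G (c, t) ∂μC
      = (Ioi (0:ℝ)).indicator (fun s => ψ s * μC (Ici s)) t := by
    intro t
    by_cases ht : 0 < t
    · have h1 : (fun c => G (c, t)) = (Ici t).indicator (fun _ => ψ t) := by
        funext c
        by_cases h : t ≤ c
        · rw [hGdef, indicator_of_mem (show ((c, t) : ℝ × ℝ) ∈ {p : ℝ × ℝ | 0 < p.2 ∧ p.2 ≤ p.1} from ⟨ht, h⟩),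
            indicator_of_mem (show c ∈ Ici t from h)]
        · rw [hGdef, indicator_of_notMem (show ((c, t) : ℝ × ℝ) ∉ {p : ℝ × ℝ | 0 < p.2 ∧ p.2 ≤ p.1} from fun hm => h hm.2),
            indicator_of_notMem (show c ∉ Ici t from h)]
      rw [h1, lintegral_indicator measurableSet_Ici, setLIntegral_const,
        indicator_of_mem (show t ∈ Ioi (0:ℝ) from ht)]
    · have h1 : (fun c => G (c, t)) = fun _ => 0 := by
        funext c
        exact indicator_of_notMem (fun hm => ht hm.1) _
      rw [h1, lintegral_const, zero_mul, indicator_of_notMem (show t ∉ Ioi (0:ℝ) from ht)]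
  have hae : ∀ᵐ t : ℝ ∂(volume.restrict (Ioi 0)), μC (Ici t) = μC (Ioi t) := by
    have hcnt : Set.Countable {t : ℝ | 0 < μC {t}} :=
      Measure.countable_meas_pos_of_disjoint_iUnion (μ := μC) (As := fun t : ℝ => {t})
        (fun t => measurableSet_singleton t)
        (fun s t hst => by simp [Function.onFun, hst])
    have h0 : (volume : Measure ℝ) {t : ℝ | μC {t} ≠ 0} = 0 := by
      refine measure_mono_null (fun t ht => ?_) (hcnt.measure_zero volume)
      exact pos_iff_ne_zero.2 ht
    refine ae_restrict_of_ae ?_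
    refine (ae_iff.2 ?_).mono (fun t (h : μC {t} = 0) => ?_)
    · exact measure_mono_null (fun t ht => ht) h0
    · refine le_antisymm ?_ (measure_mono Ioi_subset_Ici_self)
      have hsub : Ici t ⊆ {t} ∪ Ioi t := by
        intro x hx
        rcases eq_or_lt_of_le (mem_Ici.1 hx) with he | hlt
        · exact Or.inl (by simp [he.symm])
        · exact Or.inr hlt
      calc μC (Ici t) ≤ μC ({t} ∪ Ioi t) := measure_mono hsub
        _ ≤ μC {t} + μC (Ioi t) := measure_union_le _ _
        _ = μC (Ioi t) := by rw [h, zero_add]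
  have hmIoi : Measurable fun t : ℝ => μC (Ioi t) :=
    Antitone.measurable (fun s t hst => measure_mono (Ioi_subset_Ioi hst))
  have hintm : Measurable fun t : ℝ =>
      w t * (ENNReal.ofReal (Real.exp (-(Λ t * a))) * μC (Ioi t)) := by
    apply hwm.mul
    apply Measurable.mul _ hmIoi
    exact ENNReal.measurable_ofReal.comp hec.measurable
  have hRHS : P {ω | Y ω ≤ C ω} = ENNReal.ofReal a * I := by
    calc P {ω | Y ω ≤ C ω} = ∫⁻ c, μY (Iic c) ∂μC := hPYC
      _ = ∫⁻ c, ∫⁻ t, G (c, t) ∂volume ∂μC :=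
          lintegral_congr fun c => by rw [hYIic c, hG1 c]
      _ = ∫⁻ t, ∫⁻ c, G (c, t) ∂μC ∂volume := hswap2
      _ = ∫⁻ t, (Ioi (0:ℝ)).indicator (fun s => ψ s * μC (Ici s)) t ∂volume :=
          lintegral_congr hG2
      _ = ∫⁻ t in Ioi (0:ℝ), ψ t * μC (Ici t) ∂volume := by
          rw [lintegral_indicator measurableSet_Ioi]
      _ = ∫⁻ t in Ioi (0:ℝ), ψ t * μC (Ioi t) ∂volume :=
          lintegral_congr_ae (hae.mono fun t h => by simp only [h])
      _ = ∫⁻ t in Ioi (0:ℝ), ENNReal.ofReal a *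
            (w t * (ENNReal.ofReal (Real.exp (-(Λ t * a))) * μC (Ioi t))) ∂volume := by
          refine setLIntegral_congr_fun measurableSet_Ioi (fun t ht => ?_)
          rw [hψdef]
          simp only
          rw [ENNReal.ofReal_mul ha.le]
          ring
      _ = ENNReal.ofReal a * I := by
          rw [hIdef, lintegral_const_mul _ hintm]
  have hIfin : I ≠ ⊤ := by
    intro htop
    have hcon := hRHS
    rw [htop, ENNReal.mul_top (ENNReal.ofReal_pos.2 ha).ne'] at hcon
    exact measure_ne_top P _ hcon
  have hnnae : 0 ≤ᵐ[P] fun ω => Λ (min (Y ω) (C ω)) :=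
    ae_of_all _ fun ω => DinaA4.lamNN hlnn hloc hΛ (le_min (hYnn ω) (hCnn ω))
  rw [integral_eq_lintegral_of_nonneg_ae hnnae (hΛm.comp (hY.min hC)).aestronglyMeasurable]
  have hset : {ω | C ω ≥ Y ω} = {ω | Y ω ≤ C ω} := rfl
  have hLHS' : ∫⁻ ω, ENNReal.ofReal ((fun ω => Λ (min (Y ω) (C ω))) ω) ∂P = I := hLHS
  rw [hLHS', hset, hRHS, ENNReal.toReal_mul, ENNReal.toReal_ofReal ha.le,
    ← mul_assoc, ← Real.exp_add]
  simp
end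

section
/- Let (Ω, P) carry a {0,1}-valued random variable W with P(W = 1) = e ∈ (0,1) and random variables Y₀, C₀, Y₁, C₁ ≥ 0 with W independent of (Y₀, C₀, Y₁, C₁) and, for each w ∈ {0,1}, Y_w independent of C_w. Let λ : [0,∞) → [0,∞) be measurable and locally integrable, Λ(y) := ∫₀^y λ(t) dt, and η₀, η₁ ∈ ℝ with P(Y_w > y) = exp(−Λ(y)·exp(η_w)) for all y ≥ 0 and w ∈ {0,1}, with each Y_w real-valued. Define p_w := P(C_w ≥ Y_w), assume e·p₁ + (1−e)·p₀ > 0, and set a := e·p₁/(e·p₁ + (1−e)·p₀), η_W := W·η₁ + (1−W)·η₀, and Y^c := min(Y_W, C_W) (i.e., W·min(Y₁,C₁) + (1−W)·min(Y₀,C₀)). Then E[(W − a) · exp(η_W) · Λ(Y^c)] = 0. (This verifies, at a fixed covariate value, that the ρ-derivative of the Cox full-likelihood score vanishes at the true nuisance functions — the Neyman orthogonality established in the proof of the paper's Proposition 2.) -/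
open MeasureTheory Set

lemma abs_exp_sub_exp_le (x y : ℝ) :
    |Real.exp x - Real.exp y| ≤ |x - y| * Real.exp (max x y) := by
  wlog h : y ≤ x generalizing x y
  · rw [abs_sub_comm, abs_sub_comm x y, max_comm]
    exact this _ _ (le_of_not_ge h)
  have h1 : Real.exp y = Real.exp x * Real.exp (y - x) := by
    rw [← Real.exp_add]; ring_nf
  have h2 : y - x + 1 ≤ Real.exp (y - x) := Real.add_one_le_exp _
  have hx := Real.exp_pos x
  have hnn : (0:ℝ) ≤ Real.exp x - Real.exp y :=
    sub_nonneg.2 (Real.exp_le_exp.2 h)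
  rw [abs_of_nonneg hnn, abs_of_nonneg (by linarith : (0:ℝ) ≤ x - y), max_eq_left h]
  nlinarith

lemma cox_key_cont (g : ℝ → ℝ) (hg : Continuous g) (c : ℝ) :
    ∫ t in (0:ℝ)..c, g t * Real.exp (-∫ s in (0:ℝ)..t, g s) =
      1 - Real.exp (-∫ s in (0:ℝ)..c, g s) := by
  set G : ℝ → ℝ := fun t => ∫ s in (0:ℝ)..t, g s with hGdef
  have hGc : Continuous G :=
    intervalIntegral.continuous_primitive (fun a b => hg.intervalIntegrable a b) 0
  have hGd : ∀ t : ℝ, HasDerivAt G (g t) t := by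
    intro t
    exact intervalIntegral.integral_hasDerivAt_right (hg.intervalIntegrable 0 t)
      (hg.stronglyMeasurableAtFilter _ _) hg.continuousAt
  have hFd : ∀ t ∈ uIcc (0:ℝ) c,
      HasDerivAt (fun u => -Real.exp (-G u)) (g t * Real.exp (-G t)) t := by
    intro t _
    have : HasDerivAt (fun u => -Real.exp (-G u)) (-(Real.exp (-G t) * -g t)) t :=
      ((hGd t).neg.exp).neg
    convert this using 1
    ring
  have hcont : Continuous fun t => g t * Real.exp (-G t) := hg.mul (hGc.neg.rexp)
  have hint := intervalIntegral.integral_eq_sub_of_hasDerivAt hFd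
    (hcont.intervalIntegrable _ _)
  rw [hint]
  have hG0 : G 0 = 0 := intervalIntegral.integral_same
  rw [hG0]
  simp
  ring

lemma primitive_abs_le (f : ℝ → ℝ) (c : ℝ) (hfI : IntegrableOn f (Ioc 0 c) volume)
    (hfloc : ∀ y : ℝ, IntervalIntegrable f volume 0 y)
    (t : ℝ) (ht : t ∈ Icc (0:ℝ) c) :
    |∫ s in (0:ℝ)..t, f s| ≤ ∫ s in Ioc (0:ℝ) c, |f s| := by
  have h1 : |∫ s in (0:ℝ)..t, f s| ≤ ∫ s in Ioc (0:ℝ) t, |f s| := by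
    rw [intervalIntegral.integral_of_le ht.1]
    simpa using norm_integral_le_integral_norm (μ := volume.restrict (Ioc 0 t)) f
  have h2 : ∫ s in Ioc (0:ℝ) t, |f s| ≤ ∫ s in Ioc (0:ℝ) c, |f s| := by
    apply setIntegral_mono_set hfI.abs
    · exact Filter.Eventually.of_forall (fun _ => abs_nonneg _)
    · exact HasSubset.Subset.eventuallyLE (Ioc_subset_Ioc_right ht.2)
  linarith

lemma cox_key (lam : ℝ → ℝ) (hloc : ∀ y : ℝ, IntervalIntegrable lam volume 0 y)
    (c : ℝ) (hc : 0 ≤ c) :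
    ∫ t in (0:ℝ)..c, lam t * Real.exp (-∫ s in (0:ℝ)..t, lam s) =
      1 - Real.exp (-∫ s in (0:ℝ)..c, lam s) := by
  set Λ : ℝ → ℝ := fun t => ∫ s in (0:ℝ)..t, lam s with hΛdef
  have hlamInt : IntegrableOn lam (Ioc 0 c) volume := (hloc c).1
  set M : ℝ := ∫ t in Ioc (0:ℝ) c, |lam t| with hMdef
  have habsInt : IntegrableOn (fun t => |lam t|) (Ioc 0 c) volume := hlamInt.abs
  have hM0 : 0 ≤ M := setIntegral_nonneg measurableSet_Ioc (fun _ _ => abs_nonneg _)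
  -- generic bound for primitives
  have hprim : ∀ (f : ℝ → ℝ), IntegrableOn f (Ioc 0 c) volume →
      ∀ t ∈ Icc (0:ℝ) c, |∫ s in (0:ℝ)..t, f s| ≤ ∫ s in Ioc (0:ℝ) c, |f s| := by
    intro f hfI t ht
    have h1 : |∫ s in (0:ℝ)..t, f s| ≤ ∫ s in Ioc (0:ℝ) t, |f s| := by
      rw [intervalIntegral.integral_of_le ht.1]
      simpa using norm_integral_le_integral_norm (μ := volume.restrict (Ioc 0 t)) f
    have h2 : ∫ s in Ioc (0:ℝ) t, |f s| ≤ ∫ s in Ioc (0:ℝ) c, |f s| := by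
      apply setIntegral_mono_set hfI.abs
      · exact Filter.Eventually.of_forall (fun _ => abs_nonneg _)
      · exact HasSubset.Subset.eventuallyLE (Ioc_subset_Ioc_right ht.2)
    linarith
  have hΛbd : ∀ t ∈ Icc (0:ℝ) c, |Λ t| ≤ M := hprim lam hlamInt
  set B : ℝ := Real.exp (M + 1) with hBdef
  have hB0 : 0 < B := Real.exp_pos _
  set C : ℝ := B * (2 + M) with hCdef
  have hC0 : 0 ≤ C := by positivity
  set X : ℝ := (∫ t in (0:ℝ)..c, lam t * Real.exp (-Λ t)) - (1 - Real.exp (-Λ c)) with hXdef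
  have main : ∀ ε : ℝ, 0 < ε → ε ≤ 1 → |X| ≤ ε * C := by
    intro ε hε0 hε1
    -- approximate lam (as indicator function on Ioc 0 c) by a continuous g
    have hlam1 : Integrable ((Ioc (0:ℝ) c).indicator lam) volume :=
      (integrable_indicator_iff measurableSet_Ioc).2 hlamInt
    obtain ⟨g, -, hgclose, hgcont, hgint1⟩ :=
      hlam1.exists_hasCompactSupport_integral_sub_le hε0
    have hgInt : IntegrableOn g (Ioc 0 c) volume := hgint1.integrableOn
    have hsubInt : IntegrableOn (fun t => lam t - g t) (Ioc 0 c) volume := hlamInt.sub hgInt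
    have hclose : ∫ t in Ioc (0:ℝ) c, |lam t - g t| ≤ ε := by
      have heq : ∫ t in Ioc (0:ℝ) c, |lam t - g t|
          = ∫ t in Ioc (0:ℝ) c, ‖(Ioc (0:ℝ) c).indicator lam t - g t‖ := by
        apply setIntegral_congr_fun measurableSet_Ioc
        intro t ht
        simp only [indicator_of_mem ht, Real.norm_eq_abs]
      rw [heq]
      refine le_trans (setIntegral_le_integral (hlam1.sub hgint1).norm ?_) hgclose
      exact Filter.Eventually.of_forall (fun _ => norm_nonneg _)
    set G : ℝ → ℝ := fun t => ∫ s in (0:ℝ)..t, g s with hGdef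
    have hGc : Continuous G :=
      intervalIntegral.continuous_primitive (fun a b => hgcont.intervalIntegrable a b) 0
    have hΛc : Continuous Λ := by
      apply intervalIntegral.continuous_primitive (fun a b => ?_) 0
      exact ((hloc a).symm.trans (hloc b))
    -- distance between primitives
    have hdist : ∀ t ∈ Icc (0:ℝ) c, |Λ t - G t| ≤ ε := by
      intro t ht
      have hsub : Λ t - G t = ∫ s in (0:ℝ)..t, (lam s - g s) := by
        rw [hΛdef, hGdef]
        exact (intervalIntegral.integral_sub (hloc t) (hgcont.intervalIntegrable 0 t)).symm
      rw [hsub]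
      exact le_trans (hprim _ hsubInt t ht) hclose
    have hGbd : ∀ t ∈ Icc (0:ℝ) c, |G t| ≤ M + 1 := by
      intro t ht
      have := hΛbd t ht; have := hdist t ht
      have : |G t| ≤ |Λ t| + |Λ t - G t| := by
        calc |G t| = |Λ t - (Λ t - G t)| := by ring_nf
        _ ≤ |Λ t| + |Λ t - G t| := abs_sub _ _
      linarith [hΛbd t ht, hdist t ht]
    -- exponential bounds on Icc 0 c
    have hexpΛ : ∀ t ∈ Icc (0:ℝ) c, Real.exp (-Λ t) ≤ B := by
      intro t ht
      apply Real.exp_le_exp.2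
      have := hΛbd t ht
      have := abs_le.1 this
      linarith [this.1]
    have hexpG : ∀ t ∈ Icc (0:ℝ) c, Real.exp (-G t) ≤ B := by
      intro t ht
      apply Real.exp_le_exp.2
      have := abs_le.1 (hGbd t ht)
      linarith [this.1]
    have hexpdiff : ∀ t ∈ Icc (0:ℝ) c, |Real.exp (-Λ t) - Real.exp (-G t)| ≤ ε * B := by
      intro t ht
      refine le_trans (abs_exp_sub_exp_le _ _) ?_
      have h1 : |-Λ t - -G t| ≤ ε := by
        rw [show -Λ t - -G t = -(Λ t - G t) by ring, abs_neg]
        exact hdist t ht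
      have h2 : Real.exp (max (-Λ t) (-G t)) ≤ B := by
        rcases max_cases (-Λ t) (-G t) with ⟨h, -⟩ | ⟨h, -⟩
        · rw [h]; exact hexpΛ t ht
        · rw [h]; exact hexpG t ht
      exact mul_le_mul h1 h2 (Real.exp_pos _).le hε0.le
    -- integrability of the two products
    have hml : AEStronglyMeasurable (fun t => Real.exp (-Λ t)) (volume.restrict (Ioc 0 c)) :=
      (hΛc.neg.rexp).aestronglyMeasurable
    have hmg : AEStronglyMeasurable (fun t => Real.exp (-G t)) (volume.restrict (Ioc 0 c)) :=
      (hGc.neg.rexp).aestronglyMeasurable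
    have haeΛ : ∀ᵐ t ∂(volume.restrict (Ioc (0:ℝ) c)), ‖Real.exp (-Λ t)‖ ≤ B := by
      refine (ae_restrict_iff' measurableSet_Ioc).2 (Filter.Eventually.of_forall fun t ht => ?_)
      rw [Real.norm_eq_abs, abs_of_pos (Real.exp_pos _)]
      exact hexpΛ t (Ioc_subset_Icc_self ht)
    have haeG : ∀ᵐ t ∂(volume.restrict (Ioc (0:ℝ) c)), ‖Real.exp (-G t)‖ ≤ B := by
      refine (ae_restrict_iff' measurableSet_Ioc).2 (Filter.Eventually.of_forall fun t ht => ?_)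
      rw [Real.norm_eq_abs, abs_of_pos (Real.exp_pos _)]
      exact hexpG t (Ioc_subset_Icc_self ht)
    have hIl : IntegrableOn (fun t => lam t * Real.exp (-Λ t)) (Ioc 0 c) volume := by
      have := hlamInt.bdd_mul hml haeΛ
      exact this.congr (Filter.Eventually.of_forall fun t => mul_comm _ _)
    have hIg : IntegrableOn (fun t => g t * Real.exp (-G t)) (Ioc 0 c) volume := by
      have := hgInt.bdd_mul hmg haeG
      exact this.congr (Filter.Eventually.of_forall fun t => mul_comm _ _)
    -- pointwise bound for the difference of integrands
    have hpt : ∀ t ∈ Ioc (0:ℝ) c,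
        |lam t * Real.exp (-Λ t) - g t * Real.exp (-G t)|
          ≤ B * |lam t - g t| + (ε * B) * |lam t| := by
      intro t ht
      have htI : t ∈ Icc (0:ℝ) c := Ioc_subset_Icc_self ht
      have e1 := hexpG t htI
      have e2 := hexpdiff t htI
      have hsplit : lam t * Real.exp (-Λ t) - g t * Real.exp (-G t)
          = (lam t - g t) * Real.exp (-G t)
            + lam t * (Real.exp (-Λ t) - Real.exp (-G t)) := by ring
      rw [hsplit]
      refine le_trans (abs_add_le _ _) ?_
      rw [abs_mul, abs_mul]
      have b1 : |lam t - g t| * |Real.exp (-G t)| ≤ B * |lam t - g t| := by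
        rw [abs_of_pos (Real.exp_pos _), mul_comm]
        exact mul_le_mul_of_nonneg_right e1 (abs_nonneg _)
      have b2 : |lam t| * |Real.exp (-Λ t) - Real.exp (-G t)| ≤ (ε * B) * |lam t| := by
        rw [mul_comm]
        exact mul_le_mul_of_nonneg_right e2 (abs_nonneg _)
      linarith
    -- bound the integral difference
    have hIdiff : IntegrableOn
        (fun t => lam t * Real.exp (-Λ t) - g t * Real.exp (-G t)) (Ioc 0 c) volume :=
      hIl.sub hIg
    have hIbound : IntegrableOn
        (fun t => B * |lam t - g t| + (ε * B) * |lam t|) (Ioc 0 c) volume :=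
      (hsubInt.abs.const_mul B).add (habsInt.const_mul (ε * B))
    have hD1 : |(∫ t in (0:ℝ)..c, lam t * Real.exp (-Λ t))
        - (∫ t in (0:ℝ)..c, g t * Real.exp (-G t))| ≤ B * ε + (ε * B) * M := by
      have hsub : (∫ t in (0:ℝ)..c, lam t * Real.exp (-Λ t))
          - (∫ t in (0:ℝ)..c, g t * Real.exp (-G t))
          = ∫ t in Ioc (0:ℝ) c, (lam t * Real.exp (-Λ t) - g t * Real.exp (-G t)) := by
        rw [intervalIntegral.integral_of_le hc, intervalIntegral.integral_of_le hc]
        exact (integral_sub hIl hIg).symm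
      rw [hsub]
      have h1 : |∫ t in Ioc (0:ℝ) c, (lam t * Real.exp (-Λ t) - g t * Real.exp (-G t))|
          ≤ ∫ t in Ioc (0:ℝ) c, |lam t * Real.exp (-Λ t) - g t * Real.exp (-G t)| := by
        simpa using norm_integral_le_integral_norm (μ := volume.restrict (Ioc 0 c))
          (fun t => lam t * Real.exp (-Λ t) - g t * Real.exp (-G t))
      have h2 : ∫ t in Ioc (0:ℝ) c, |lam t * Real.exp (-Λ t) - g t * Real.exp (-G t)|
          ≤ ∫ t in Ioc (0:ℝ) c, (B * |lam t - g t| + (ε * B) * |lam t|) :=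
        setIntegral_mono_on hIdiff.abs hIbound measurableSet_Ioc hpt
      have h3 : ∫ t in Ioc (0:ℝ) c, (B * |lam t - g t| + (ε * B) * |lam t|)
          = B * (∫ t in Ioc (0:ℝ) c, |lam t - g t|) + (ε * B) * M := by
        rw [integral_add (hsubInt.abs.const_mul B) (habsInt.const_mul (ε * B)),
          integral_const_mul, integral_const_mul, hMdef]
      have h4 : B * (∫ t in Ioc (0:ℝ) c, |lam t - g t|) ≤ B * ε :=
        mul_le_mul_of_nonneg_left hclose hB0.le
      linarith
    -- use the exact identity for g
    have hkeyg := cox_key_cont g hgcont c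
    have hclose_c : |Real.exp (-Λ c) - Real.exp (-G c)| ≤ ε * B :=
      hexpdiff c ⟨hc, le_refl c⟩
    have hXsplit : X = ((∫ t in (0:ℝ)..c, lam t * Real.exp (-Λ t))
        - (∫ t in (0:ℝ)..c, g t * Real.exp (-G t)))
        + (Real.exp (-Λ c) - Real.exp (-G c)) := by
      rw [hXdef]
      rw [show (∫ t in (0:ℝ)..c, g t * Real.exp (-G t)) = 1 - Real.exp (-G c) from hkeyg]
      ring
    calc |X| ≤ |(∫ t in (0:ℝ)..c, lam t * Real.exp (-Λ t))
        - (∫ t in (0:ℝ)..c, g t * Real.exp (-G t))|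
        + |Real.exp (-Λ c) - Real.exp (-G c)| := by rw [hXsplit]; exact abs_add_le _ _
    _ ≤ (B * ε + (ε * B) * M) + ε * B := add_le_add hD1 hclose_c
    _ = ε * C := by rw [hCdef]; ring
  -- conclude X = 0
  have hX0 : X = 0 := by
    have hle : ∀ δ : ℝ, 0 < δ → |X| ≤ δ := by
      intro δ hδ
      have hC1 : (0:ℝ) < C + 1 := by linarith
      have hε0 : 0 < min 1 (δ / (C + 1)) := lt_min one_pos (div_pos hδ hC1)
      have h := main _ hε0 (min_le_left _ _)
      calc |X| ≤ min 1 (δ / (C + 1)) * C := h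
      _ ≤ (δ / (C + 1)) * C := mul_le_mul_of_nonneg_right (min_le_right _ _) hC0
      _ ≤ (δ / (C + 1)) * (C + 1) := by
          apply mul_le_mul_of_nonneg_left (by linarith) (le_of_lt (div_pos hδ hC1))
      _ = δ := div_mul_cancel₀ δ (ne_of_gt hC1)
    have : |X| ≤ 0 := le_of_forall_pos_le_add (by intro δ hδ; simpa using hle δ hδ)
    have := abs_nonneg X
    have : |X| = 0 := le_antisymm ‹|X| ≤ 0› ‹0 ≤ |X|›
    exact abs_eq_zero.1 this
  have := sub_eq_zero.1 hX0
  exact this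

lemma cox_arm {Ω : Type*} [MeasurableSpace Ω] (P : Measure Ω) [IsProbabilityMeasure P]
    (Y C : Ω → ℝ) (hY : Measurable Y) (hC : Measurable C)
    (hYnn : ∀ ω, 0 ≤ Y ω) (hCnn : ∀ ω, 0 ≤ C ω)
    (hind : ProbabilityTheory.IndepFun Y C P)
    (lam : ℝ → ℝ) (hlm : Measurable lam) (hlnn : ∀ t ≥ (0:ℝ), 0 ≤ lam t)
    (hloc : ∀ y : ℝ, IntervalIntegrable lam volume 0 y)
    (hsurv : ∀ y ≥ (0:ℝ),
      P {ω | Y ω > y} = ENNReal.ofReal (Real.exp (-∫ t in (0:ℝ)..y, lam t))) :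
    ∫⁻ ω, ENNReal.ofReal (∫ t in (0:ℝ)..(min (Y ω) (C ω)), lam t) ∂P
      = P {ω | C ω ≥ Y ω} := by
  set Λ : ℝ → ℝ := fun t => ∫ s in (0:ℝ)..t, lam s with hΛdef
  have hΛc : Continuous Λ := by
    apply intervalIntegral.continuous_primitive (fun a b => ?_) 0
    exact ((hloc a).symm.trans (hloc b))
  have hΛnn : ∀ y, 0 ≤ y → 0 ≤ Λ y := by
    intro y hy
    exact intervalIntegral.integral_nonneg hy (fun t ht => hlnn t ht.1)
  set m : Ω → ℝ := fun ω => min (Y ω) (C ω) with hmdef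
  have hm : Measurable m := hY.min hC
  have hmnn : ∀ ω, 0 ≤ m ω := fun ω => le_min (hYnn ω) (hCnn ω)
  set ν : Measure ℝ :=
    (volume.withDensity fun t => ENNReal.ofReal (lam t)).restrict (Ioi 0) with hνdef
  haveI : SigmaFinite (volume.withDensity fun t => ENNReal.ofReal (lam t)) :=
    SigmaFinite.withDensity_ofReal _
  haveI : SigmaFinite ν := by rw [hνdef]; infer_instance
  -- ν of initial segments
  have hνIio : ∀ y : ℝ, 0 ≤ y → ν (Iio y) = ENNReal.ofReal (Λ y) := by
    intro y hy
    rw [hνdef, Measure.restrict_apply measurableSet_Iio, Iio_inter_Ioi,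
      withDensity_apply _ measurableSet_Ioo]
    have hInt : IntegrableOn lam (Ioo 0 y) volume :=
      (hloc y).1.mono_set Ioo_subset_Ioc_self
    have hae : 0 ≤ᵐ[volume.restrict (Ioo (0:ℝ) y)] lam :=
      (ae_restrict_iff' measurableSet_Ioo).2
        (Filter.Eventually.of_forall fun t ht => hlnn t ht.1.le)
    rw [← ofReal_integral_eq_lintegral_ofReal hInt hae]
    congr 1
    rw [hΛdef]
    simp only []
    rw [intervalIntegral.integral_of_le hy, ← integral_Ioc_eq_integral_Ioo]
  -- step 1: rewrite integrand via ν
  have step1 : ∫⁻ ω, ENNReal.ofReal (Λ (m ω)) ∂P = ∫⁻ ω, ν (Iio (m ω)) ∂P := by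
    apply lintegral_congr
    intro ω
    rw [hνIio (m ω) (hmnn ω)]
  -- step 2: swap (Tonelli)
  have meas_set1 : MeasurableSet {p : Ω × ℝ | p.2 < m p.1} :=
    measurableSet_lt measurable_snd (hm.comp measurable_fst)
  have step2 : ∫⁻ ω, ν (Iio (m ω)) ∂P = ∫⁻ t, P {ω | t < m ω} ∂ν := by
    have lhs : ∀ ω, ν (Iio (m ω))
        = ∫⁻ t, ({p : Ω × ℝ | p.2 < m p.1}.indicator 1) (ω, t) ∂ν := by
      intro ω
      rw [← lintegral_indicator_one measurableSet_Iio]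
      apply lintegral_congr
      intro t
      by_cases h : t < m ω
      · simp [Set.indicator_apply, h]
      · simp [Set.indicator_apply, h]
    have rhs : ∀ t : ℝ, P {ω | t < m ω}
        = ∫⁻ ω, ({p : Ω × ℝ | p.2 < m p.1}.indicator 1) (ω, t) ∂P := by
      intro t
      have hms : MeasurableSet {ω | t < m ω} := hm (measurableSet_Ioi (a := t))
      rw [← lintegral_indicator_one hms]
      apply lintegral_congr
      intro ω
      by_cases h : t < m ω
      · simp [Set.indicator_apply, h]
      · simp [Set.indicator_apply, h]
    simp only [lhs, rhs]
    apply lintegral_lintegral_swap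
    exact ((measurable_one.indicator meas_set1).aemeasurable)
  -- step 3: independence factorizes the survival probabilities
  have step3 : ∫⁻ t, P {ω | t < m ω} ∂ν
      = ∫⁻ t, ENNReal.ofReal (Real.exp (-Λ t)) * P {ω | t < C ω} ∂ν := by
    apply lintegral_congr_ae
    have hae : ∀ᵐ t ∂ν, t ∈ Ioi (0:ℝ) := by
      rw [hνdef]; exact ae_restrict_mem measurableSet_Ioi
    filter_upwards [hae] with t (ht : (0:ℝ) < t)
    have hsetm : {ω | t < m ω} = Y ⁻¹' (Ioi t) ∩ C ⁻¹' (Ioi t) := by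
      ext ω
      simp [hmdef, lt_min_iff, mem_preimage, mem_Ioi]
    rw [hsetm, hind.measure_inter_preimage_eq_mul _ _ measurableSet_Ioi measurableSet_Ioi]
    have h1 : P (Y ⁻¹' (Ioi t)) = ENNReal.ofReal (Real.exp (-Λ t)) := hsurv t ht.le
    have h2 : P (C ⁻¹' (Ioi t)) = P {ω | t < C ω} := rfl
    rw [h1, h2]
  -- step 4: swap back (Tonelli)
  have meas_set2 : MeasurableSet {p : Ω × ℝ | p.2 < C p.1} :=
    measurableSet_lt measurable_snd (hC.comp measurable_fst)
  have hexpmeas : Measurable fun t : ℝ => ENNReal.ofReal (Real.exp (-Λ t)) :=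
    (hΛc.neg.rexp).measurable.ennreal_ofReal
  have step4 : ∫⁻ t, ENNReal.ofReal (Real.exp (-Λ t)) * P {ω | t < C ω} ∂ν
      = ∫⁻ ω, ∫⁻ t in Iio (C ω), ENNReal.ofReal (Real.exp (-Λ t)) ∂ν ∂P := by
    set F : Ω → ℝ → ENNReal := fun ω t =>
      ENNReal.ofReal (Real.exp (-Λ t)) * ({p : Ω × ℝ | p.2 < C p.1}.indicator 1 (ω, t))
      with hFdef
    have hswap : ∫⁻ ω, ∫⁻ t, F ω t ∂ν ∂P = ∫⁻ t, ∫⁻ ω, F ω t ∂P ∂ν := by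
      apply lintegral_lintegral_swap
      apply Measurable.aemeasurable
      exact (hexpmeas.comp measurable_snd).mul (measurable_one.indicator meas_set2)
    have lhs : ∀ t : ℝ, ENNReal.ofReal (Real.exp (-Λ t)) * P {ω | t < C ω}
        = ∫⁻ ω, F ω t ∂P := by
      intro t
      have hms : MeasurableSet {ω | t < C ω} := hC (measurableSet_Ioi (a := t))
      have hmeasω : Measurable fun ω : Ω => ({p : Ω × ℝ | p.2 < C p.1}.indicator
          (1 : Ω × ℝ → ENNReal) (ω, t)) :=
        (measurable_one.indicator meas_set2).comp (measurable_prodMk_right)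
      rw [hFdef]
      simp only []
      rw [lintegral_const_mul _ hmeasω]
      congr 1
      rw [← lintegral_indicator_one hms]
      apply lintegral_congr
      intro ω
      by_cases h : t < C ω
      · simp [Set.indicator_apply, h]
      · simp [Set.indicator_apply, h]
    have rhs : ∀ ω : Ω, ∫⁻ t, F ω t ∂ν
        = ∫⁻ t in Iio (C ω), ENNReal.ofReal (Real.exp (-Λ t)) ∂ν := by
      intro ω
      rw [← lintegral_indicator measurableSet_Iio]
      apply lintegral_congr
      intro t
      by_cases h : t < C ω
      · simp [hFdef, Set.indicator_apply, h]
      · simp [hFdef, Set.indicator_apply, h]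
    simp only [lhs]
    rw [← hswap]
    simp only [rhs]
  -- step 5: exact computation of the inner integral
  have step5 : ∀ c : ℝ, 0 ≤ c →
      ∫⁻ t in Iio c, ENNReal.ofReal (Real.exp (-Λ t)) ∂ν
        = ENNReal.ofReal (1 - Real.exp (-Λ c)) := by
    intro c hc
    rw [hνdef, Measure.restrict_restrict measurableSet_Iio, Iio_inter_Ioi,
      setLIntegral_withDensity_eq_setLIntegral_mul _ hlm.ennreal_ofReal
        hexpmeas measurableSet_Ioo]
    have hcongr : ∫⁻ t in Ioo (0:ℝ) c,
        ((fun t => ENNReal.ofReal (lam t)) * fun t => ENNReal.ofReal (Real.exp (-Λ t))) t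
          ∂volume
        = ∫⁻ t in Ioo (0:ℝ) c, ENNReal.ofReal (lam t * Real.exp (-Λ t)) ∂volume := by
      apply setLIntegral_congr_fun_ae measurableSet_Ioo
      apply Filter.Eventually.of_forall
      intro t ht
      simp only [Pi.mul_apply]
      rw [← ENNReal.ofReal_mul (hlnn t ht.1.le)]
    rw [hcongr]
    -- integrability of lam * exp (-Λ) on Ioo 0 c
    have hlamInt : IntegrableOn lam (Ioo 0 c) volume :=
      (hloc c).1.mono_set Ioo_subset_Ioc_self
    set M : ℝ := ∫ s in Ioc (0:ℝ) c, |lam s| with hMdef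
    have haebd : ∀ᵐ t ∂(volume.restrict (Ioo (0:ℝ) c)),
        ‖Real.exp (-Λ t)‖ ≤ Real.exp M := by
      refine (ae_restrict_iff' measurableSet_Ioo).2 (Filter.Eventually.of_forall fun t ht => ?_)
      rw [Real.norm_eq_abs, abs_of_pos (Real.exp_pos _)]
      apply Real.exp_le_exp.2
      have := abs_le.1 (primitive_abs_le lam c (hloc c).1 hloc t
        ⟨ht.1.le, ht.2.le⟩)
      linarith [this.1]
    have hImul : IntegrableOn (fun t => lam t * Real.exp (-Λ t)) (Ioo 0 c) volume := by
      have := hlamInt.bdd_mul ((hΛc.neg.rexp).aestronglyMeasurable) haebd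
      exact this.congr (Filter.Eventually.of_forall fun t => mul_comm _ _)
    have haenn : 0 ≤ᵐ[volume.restrict (Ioo (0:ℝ) c)] fun t => lam t * Real.exp (-Λ t) :=
      (ae_restrict_iff' measurableSet_Ioo).2 (Filter.Eventually.of_forall fun t ht =>
        mul_nonneg (hlnn t ht.1.le) (Real.exp_pos _).le)
    rw [← ofReal_integral_eq_lintegral_ofReal hImul haenn]
    congr 1
    rw [← integral_Ioc_eq_integral_Ioo, ← intervalIntegral.integral_of_le hc]
    exact cox_key lam hloc c hc
  -- step 6: integrate out C
  have step6 : ∫⁻ ω, ∫⁻ t in Iio (C ω), ENNReal.ofReal (Real.exp (-Λ t)) ∂ν ∂P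
      = ∫⁻ ω, (1 - ENNReal.ofReal (Real.exp (-Λ (C ω)))) ∂P := by
    apply lintegral_congr
    intro ω
    rw [step5 (C ω) (hCnn ω), ENNReal.ofReal_sub _ (Real.exp_pos _).le, ENNReal.ofReal_one]
  have hboundC : ∀ ω, ENNReal.ofReal (Real.exp (-Λ (C ω))) ≤ 1 := by
    intro ω
    rw [← ENNReal.ofReal_one]
    apply ENNReal.ofReal_le_ofReal
    rw [Real.exp_le_one_iff]
    simpa using hΛnn (C ω) (hCnn ω)
  have hmeasC : Measurable fun ω => ENNReal.ofReal (Real.exp (-Λ (C ω))) :=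
    hexpmeas.comp hC
  have step6b : ∫⁻ ω, (1 - ENNReal.ofReal (Real.exp (-Λ (C ω)))) ∂P
      = 1 - ∫⁻ ω, ENNReal.ofReal (Real.exp (-Λ (C ω))) ∂P := by
    have hfin : ∫⁻ ω, ENNReal.ofReal (Real.exp (-Λ (C ω))) ∂P ≠ ⊤ := by
      apply ne_top_of_le_ne_top (by simp : (1 : ENNReal) ≠ ⊤)
      calc ∫⁻ ω, ENNReal.ofReal (Real.exp (-Λ (C ω))) ∂P ≤ ∫⁻ _, 1 ∂P :=
        lintegral_mono (fun ω => hboundC ω)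
      _ = 1 := by simp
    rw [lintegral_sub hmeasC hfin (Filter.Eventually.of_forall fun ω => hboundC ω)]
    simp
  -- step 7: identify the remaining integral with P {Y > C}
  haveI : IsProbabilityMeasure (P.map Y) := Measure.isProbabilityMeasure_map hY.aemeasurable
  haveI : IsProbabilityMeasure (P.map C) := Measure.isProbabilityMeasure_map hC.aemeasurable
  have hset : MeasurableSet {p : ℝ × ℝ | p.2 < p.1} :=
    measurableSet_lt measurable_snd measurable_fst
  have step7 : ∫⁻ ω, ENNReal.ofReal (Real.exp (-Λ (C ω))) ∂P = P {ω | C ω < Y ω} := by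
    have hmap : P.map (fun ω => (Y ω, C ω)) = (P.map Y).prod (P.map C) :=
      (ProbabilityTheory.indepFun_iff_map_prod_eq_prod_map_map hY.aemeasurable
        hC.aemeasurable).1 hind
    have h1 : P {ω | C ω < Y ω} = (P.map (fun ω => (Y ω, C ω))) {p : ℝ × ℝ | p.2 < p.1} := by
      rw [Measure.map_apply (hY.prodMk hC) hset]
      rfl
    have h2 : ((P.map Y).prod (P.map C)) {p : ℝ × ℝ | p.2 < p.1}
        = ∫⁻ c, (P.map Y) (Ioi c) ∂(P.map C) := by
      rw [Measure.prod_apply_symm hset]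
      rfl
    have h3 : ∫⁻ c, (P.map Y) (Ioi c) ∂(P.map C)
        = ∫⁻ c, ENNReal.ofReal (Real.exp (-Λ c)) ∂(P.map C) := by
      apply lintegral_congr_ae
      have haeC : ∀ᵐ c ∂(P.map C), 0 ≤ c := by
        rw [ae_map_iff hC.aemeasurable measurableSet_Ici]
        exact Filter.Eventually.of_forall hCnn
      filter_upwards [haeC] with c hc
      rw [Measure.map_apply hY measurableSet_Ioi]
      exact hsurv c hc
    have h4 : ∫⁻ c, ENNReal.ofReal (Real.exp (-Λ c)) ∂(P.map C)
        = ∫⁻ ω, ENNReal.ofReal (Real.exp (-Λ (C ω))) ∂P :=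
      lintegral_map hexpmeas hC
    rw [h1, hmap, h2, h3, h4]
  -- conclude
  have hcompl : {ω | C ω ≥ Y ω} = {ω | C ω < Y ω}ᶜ := by
    ext ω; simp [not_lt, ge_iff_le]
  have hfinal : P {ω | C ω ≥ Y ω} = 1 - P {ω | C ω < Y ω} := by
    rw [hcompl, prob_compl_eq_one_sub (measurableSet_lt hC hY)]
  calc ∫⁻ ω, ENNReal.ofReal (∫ t in (0:ℝ)..(min (Y ω) (C ω)), lam t) ∂P
      = ∫⁻ ω, ENNReal.ofReal (Λ (m ω)) ∂P := rfl
    _ = ∫⁻ ω, ν (Iio (m ω)) ∂P := step1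
    _ = ∫⁻ t, P {ω | t < m ω} ∂ν := step2
    _ = ∫⁻ t, ENNReal.ofReal (Real.exp (-Λ t)) * P {ω | t < C ω} ∂ν := step3
    _ = ∫⁻ ω, ∫⁻ t in Iio (C ω), ENNReal.ofReal (Real.exp (-Λ t)) ∂ν ∂P := step4
    _ = ∫⁻ ω, (1 - ENNReal.ofReal (Real.exp (-Λ (C ω)))) ∂P := step6
    _ = 1 - ∫⁻ ω, ENNReal.ofReal (Real.exp (-Λ (C ω))) ∂P := step6b
    _ = 1 - P {ω | C ω < Y ω} := by rw [step7]
    _ = P {ω | C ω ≥ Y ω} := hfinal.symm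

/-- **Neyman orthogonality of the Cox full-likelihood score (paper, Prop. 2, ρ-derivative,
at a fixed covariate value).** With `W ⟂ (Y₀,C₀,Y₁,C₁)`, `Y_w ⟂ C_w`,
`P(Y_w > y) = exp(−Λ(y)·exp(η_w))` for `Λ(y) = ∫₀^y λ(t) dt`, `p_w = P(C_w ≥ Y_w)`,
`a = e·p₁/(e·p₁ + (1−e)·p₀)`, `η_W = W·η₁ + (1−W)·η₀` and `Y^c = min(Y_W, C_W)`,
one has `E[(W − a)·exp(η_W)·Λ(Y^c)] = 0`. -/
theorem dina_cox_full_likelihood_orthogonality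
    {Ω : Type*} [MeasurableSpace Ω] (P : Measure Ω) [IsProbabilityMeasure P]
    (W Y₀ C₀ Y₁ C₁ : Ω → ℝ)
    (hW : Measurable W) (hW01 : ∀ ω, W ω = 0 ∨ W ω = 1)
    (hY₀ : Measurable Y₀) (hC₀ : Measurable C₀)
    (hY₁ : Measurable Y₁) (hC₁ : Measurable C₁)
    (hY₀nn : ∀ ω, 0 ≤ Y₀ ω) (hC₀nn : ∀ ω, 0 ≤ C₀ ω)
    (hY₁nn : ∀ ω, 0 ≤ Y₁ ω) (hC₁nn : ∀ ω, 0 ≤ C₁ ω)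
    (e : ℝ) (he : e ∈ Ioo (0 : ℝ) 1) (heW : (P {ω | W ω = 1}).toReal = e)
    (hind : ProbabilityTheory.IndepFun W (fun ω => (Y₀ ω, C₀ ω, Y₁ ω, C₁ ω)) P)
    (hind0 : ProbabilityTheory.IndepFun Y₀ C₀ P)
    (hind1 : ProbabilityTheory.IndepFun Y₁ C₁ P)
    (lam : ℝ → ℝ) (hlm : Measurable lam) (hlnn : ∀ t ≥ (0 : ℝ), 0 ≤ lam t)
    (hloc : ∀ y : ℝ, IntervalIntegrable lam MeasureTheory.volume 0 y)
    (Λ : ℝ → ℝ) (hΛ : ∀ y, Λ y = ∫ t in (0 : ℝ)..y, lam t)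
    (η₀ η₁ : ℝ)
    (hsurv0 : ∀ y ≥ (0 : ℝ),
      P {ω | Y₀ ω > y} = ENNReal.ofReal (Real.exp (-(Λ y * Real.exp η₀))))
    (hsurv1 : ∀ y ≥ (0 : ℝ),
      P {ω | Y₁ ω > y} = ENNReal.ofReal (Real.exp (-(Λ y * Real.exp η₁))))
    (hΛtop : Filter.Tendsto Λ Filter.atTop Filter.atTop)
    (p₀ p₁ a : ℝ)
    (hp₀ : p₀ = (P {ω | C₀ ω ≥ Y₀ ω}).toReal)
    (hp₁ : p₁ = (P {ω | C₁ ω ≥ Y₁ ω}).toReal)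
    (hpos : 0 < e * p₁ + (1 - e) * p₀)
    (ha : a = e * p₁ / (e * p₁ + (1 - e) * p₀)) :
    ∫ ω, (W ω - a) * Real.exp (W ω * η₁ + (1 - W ω) * η₀) *
        Λ (W ω * min (Y₁ ω) (C₁ ω) + (1 - W ω) * min (Y₀ ω) (C₀ ω)) ∂P = 0 := by
  have hΛc : Continuous Λ := by
    have : Λ = fun y => ∫ t in (0:ℝ)..y, lam t := funext hΛ
    rw [this]
    apply intervalIntegral.continuous_primitive (fun a b => ?_) 0
    exact ((hloc a).symm.trans (hloc b))
  have hΛnn : ∀ y, 0 ≤ y → 0 ≤ Λ y := by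
    intro y hy
    rw [hΛ y]
    exact intervalIntegral.integral_nonneg hy (fun t ht => hlnn t ht.1)
  -- per-arm lintegral identities
  have harm : ∀ (Y C : Ω → ℝ), Measurable Y → Measurable C → (∀ ω, 0 ≤ Y ω) →
      (∀ ω, 0 ≤ C ω) → ProbabilityTheory.IndepFun Y C P → ∀ η : ℝ,
      (∀ y ≥ (0:ℝ), P {ω | Y ω > y} = ENNReal.ofReal (Real.exp (-(Λ y * Real.exp η)))) →
      ∫⁻ ω, ENNReal.ofReal (Λ (min (Y ω) (C ω)) * Real.exp η) ∂P = P {ω | C ω ≥ Y ω} := by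
    intro Y C hY hC hYnn hCnn hindYC η hsurv
    have hint : ∀ y : ℝ, (∫ t in (0:ℝ)..y, lam t * Real.exp η) = Λ y * Real.exp η := by
      intro y
      rw [intervalIntegral.integral_mul_const, ← hΛ y]
    have h := cox_arm P Y C hY hC hYnn hCnn hindYC
      (fun t => lam t * Real.exp η) (hlm.mul_const _)
      (fun t ht => mul_nonneg (hlnn t ht) (Real.exp_pos η).le)
      (fun y => (hloc y).mul_const _)
      (fun y hy => by rw [hint y]; exact hsurv y hy)
    simpa only [hint] using h
  have R1 := harm Y₁ C₁ hY₁ hC₁ hY₁nn hC₁nn hind1 η₁ hsurv1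
  have R0 := harm Y₀ C₀ hY₀ hC₀ hY₀nn hC₀nn hind0 η₀ hsurv0
  -- the two integrable nonneg factors
  set u₁ : Ω → ℝ := fun ω => Λ (min (Y₁ ω) (C₁ ω)) * Real.exp η₁ with hu₁def
  set u₀ : Ω → ℝ := fun ω => Λ (min (Y₀ ω) (C₀ ω)) * Real.exp η₀ with hu₀def
  have hu₁nn : ∀ ω, 0 ≤ u₁ ω := fun ω =>
    mul_nonneg (hΛnn _ (le_min (hY₁nn ω) (hC₁nn ω))) (Real.exp_pos _).le
  have hu₀nn : ∀ ω, 0 ≤ u₀ ω := fun ω =>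
    mul_nonneg (hΛnn _ (le_min (hY₀nn ω) (hC₀nn ω))) (Real.exp_pos _).le
  have hu₁m : Measurable u₁ := ((hΛc.measurable).comp (hY₁.min hC₁)).mul_const _
  have hu₀m : Measurable u₀ := ((hΛc.measurable).comp (hY₀.min hC₀)).mul_const _
  have hu₁int : Integrable u₁ P := by
    refine ⟨hu₁m.aestronglyMeasurable, ?_⟩
    rw [hasFiniteIntegral_iff_ofReal (Filter.Eventually.of_forall hu₁nn)]
    rw [R1]
    exact measure_lt_top P _
  have hu₀int : Integrable u₀ P := by
    refine ⟨hu₀m.aestronglyMeasurable, ?_⟩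
    rw [hasFiniteIntegral_iff_ofReal (Filter.Eventually.of_forall hu₀nn)]
    rw [R0]
    exact measure_lt_top P _
  have hu₁val : ∫ ω, u₁ ω ∂P = p₁ := by
    rw [integral_eq_lintegral_of_nonneg_ae (Filter.Eventually.of_forall hu₁nn)
      hu₁m.aestronglyMeasurable, R1, hp₁]
  have hu₀val : ∫ ω, u₀ ω ∂P = p₀ := by
    rw [integral_eq_lintegral_of_nonneg_ae (Filter.Eventually.of_forall hu₀nn)
      hu₀m.aestronglyMeasurable, R0, hp₀]
  -- W integrability and expectation
  have hWbd : ∀ ω, ‖W ω‖ ≤ 1 := by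
    intro ω; rcases hW01 ω with h | h <;> simp [h]
  have hWint : Integrable W P :=
    (integrable_const (1:ℝ)).mono' hW.aestronglyMeasurable
      (Filter.Eventually.of_forall hWbd)
  have hWval : ∫ ω, W ω ∂P = e := by
    have hWind : W = {ω | W ω = 1}.indicator (1 : Ω → ℝ) := by
      funext ω
      rcases hW01 ω with h | h <;> simp [Set.indicator_apply, h]
    have hms : MeasurableSet {ω | W ω = 1} := hW (measurableSet_singleton 1)
    rw [hWind, integral_indicator_one hms]
    exact heW
  -- the product functions
  set A : Ω → ℝ := fun ω => W ω * (1 - a) with hAdef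
  set Bf : Ω → ℝ := fun ω => (1 - W ω) * (-a) with hBdef
  have hAint : Integrable A P := hWint.mul_const _
  have hBint : Integrable Bf P := ((integrable_const (1:ℝ)).sub hWint).mul_const _
  have hAval : ∫ ω, A ω ∂P = e * (1 - a) := by
    rw [hAdef]; rw [integral_mul_const, hWval]
  have hBval : ∫ ω, Bf ω ∂P = (1 - e) * (-a) := by
    rw [hBdef]; rw [integral_mul_const, integral_sub (integrable_const 1) hWint,
      integral_const, hWval]
    simp
  -- independence of A and u₁, B and u₀
  set V : Ω → ℝ × ℝ × ℝ × ℝ := fun ω => (Y₀ ω, C₀ ω, Y₁ ω, C₁ ω) with hVdef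
  have hmin1 : Measurable fun v : ℝ × ℝ × ℝ × ℝ => Λ (min v.2.2.1 v.2.2.2) * Real.exp η₁ :=
    (hΛc.measurable.comp ((measurable_fst.comp (measurable_snd.comp measurable_snd)).min
      (measurable_snd.comp (measurable_snd.comp measurable_snd)))).mul_const _
  have hmin0 : Measurable fun v : ℝ × ℝ × ℝ × ℝ => Λ (min v.1 v.2.1) * Real.exp η₀ :=
    (hΛc.measurable.comp (measurable_fst.min (measurable_fst.comp measurable_snd))).mul_const _
  have hIndep1 : ProbabilityTheory.IndepFun A u₁ P :=
    hind.comp (measurable_id.mul_const (1 - a)) hmin1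
  have hIndep0 : ProbabilityTheory.IndepFun Bf u₀ P :=
    hind.comp ((measurable_const.sub measurable_id).mul_const (-a)) hmin0
  have hprod1 : ∫ ω, A ω * u₁ ω ∂P = (∫ ω, A ω ∂P) * ∫ ω, u₁ ω ∂P := by
    have := hIndep1.integral_fun_mul_eq_mul_integral hAint.aestronglyMeasurable hu₁int.aestronglyMeasurable
    simpa [Pi.mul_apply] using this
  have hprod0 : ∫ ω, Bf ω * u₀ ω ∂P = (∫ ω, Bf ω ∂P) * ∫ ω, u₀ ω ∂P := by
    have := hIndep0.integral_fun_mul_eq_mul_integral hBint.aestronglyMeasurable hu₀int.aestronglyMeasurable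
    simpa [Pi.mul_apply] using this
  -- integrability of products
  have hAu1int : Integrable (fun ω => A ω * u₁ ω) P := by
    apply hu₁int.bdd_mul (c := |1 - a|) hAint.aestronglyMeasurable
    apply Filter.Eventually.of_forall
    intro ω
    rw [hAdef]
    simp only [Real.norm_eq_abs, abs_mul]
    rcases hW01 ω with h | h <;> simp [h]
  have hBu0int : Integrable (fun ω => Bf ω * u₀ ω) P := by
    apply hu₀int.bdd_mul (c := |a|) hBint.aestronglyMeasurable
    apply Filter.Eventually.of_forall
    intro ω
    rw [hBdef]
    simp only [Real.norm_eq_abs, abs_mul, abs_neg]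
    rcases hW01 ω with h | h <;> simp [h]
  -- pointwise decomposition
  have hdecomp : (fun ω => (W ω - a) * Real.exp (W ω * η₁ + (1 - W ω) * η₀) *
      Λ (W ω * min (Y₁ ω) (C₁ ω) + (1 - W ω) * min (Y₀ ω) (C₀ ω)))
      = fun ω => A ω * u₁ ω + Bf ω * u₀ ω := by
    funext ω
    simp only [hAdef, hBdef, hu₁def, hu₀def]
    rcases hW01 ω with h | h <;> rw [h] <;> norm_num <;> ring
  rw [hdecomp, integral_add hAu1int hBu0int, hprod1, hprod0, hAval, hBval, hu₁val, hu₀val]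
  rw [ha]
  field_simp
  ring
end

section
/- Let X be a random vector in ℝ^d and Z a random element (on a common probability space) such that the second-moment matrix E[X Xᵀ] exists and is positive definite, and let η₀(X, Z) be a real-valued integrable random variable (with X·η₀(X,Z) integrable componentwise). Let μ(t) = c·t + d be an affine (linear canonical link) function with c ≠ 0, and let β, β*, α* ∈ ℝ^d satisfy the population moment equations E[X·μ(η₀(X,Z))] = E[X·μ(⟨X, α*⟩)] and E[X·μ(η₀(X,Z) + ⟨X, β⟩)] = E[X·μ(⟨X, α* + β*⟩)]. Then β* = β. (This is the 'if' direction of the paper's Claim A.1: under a linear canonical link, separate generalized-linear-regression estimation of the treatment effect is consistent even when η₀ is misspecified.) -/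
open MeasureTheory

/-- **Claim A.1, 'if' direction (paper).** Under a linear canonical link `μ(t) = c·t + d`
(`c ≠ 0`), if `E[X Xᵀ]` is positive definite and `(α*, α* + β*)` solve the
separate-estimation population moment equations with true control natural parameter
`η₀(X,Z)` (here `H`) and true effect `β`, then `β* = β`. -/
theorem dina_claimA1_linear_link_consistency
    {Ω : Type*} [MeasurableSpace Ω] (P : Measure Ω) [IsProbabilityMeasure P]
    {d : ℕ} (X : Ω → Fin d → ℝ) (H : Ω → ℝ)
    (hXm : Measurable X) (hHm : Measurable H)
    (hH : Integrable H P)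
    (hXH : ∀ i, Integrable (fun ω => X ω i * H ω) P)
    (hXX : ∀ i j, Integrable (fun ω => X ω i * X ω j) P)
    (hXi : ∀ i, Integrable (fun ω => X ω i) P)
    (hpd : (Matrix.of fun i j => ∫ ω, X ω i * X ω j ∂P).PosDef)
    (c dd : ℝ) (hc : c ≠ 0)
    (β βs αs : Fin d → ℝ)
    (h1 : ∀ i, ∫ ω, X ω i * (c * H ω + dd) ∂P
        = ∫ ω, X ω i * (c * (∑ j, X ω j * αs j) + dd) ∂P)
    (h2 : ∀ i, ∫ ω, X ω i * (c * (H ω + ∑ j, X ω j * β j) + dd) ∂P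
        = ∫ ω, X ω i * (c * (∑ j, X ω j * (αs j + βs j)) + dd) ∂P) :
    βs = β := by
  set M : Matrix (Fin d) (Fin d) ℝ := Matrix.of fun i j => ∫ ω, X ω i * X ω j ∂P with hM
  have hsum : ∀ (a : Fin d → ℝ) (i : Fin d) (ω : Ω),
      X ω i * ∑ j, X ω j * a j = ∑ j, (X ω i * X ω j) * a j := by
    intro a i ω
    rw [Finset.mul_sum]
    exact Finset.sum_congr rfl (fun j _ => by ring)
  -- key: integral of X_i * (c * (X ⬝ a) + dd)
  have key : ∀ (a : Fin d → ℝ) (i : Fin d),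
      ∫ ω, X ω i * (c * (∑ j, X ω j * a j) + dd) ∂P
        = c * ∑ j, (∫ ω, X ω i * X ω j ∂P) * a j + dd * ∫ ω, X ω i ∂P := by
    intro a i
    have hpt : ∀ ω, X ω i * (c * (∑ j, X ω j * a j) + dd)
        = c * (∑ j, (X ω i * X ω j) * a j) + dd * X ω i := by
      intro ω
      rw [← hsum a i ω]
      ring
    calc ∫ ω, X ω i * (c * (∑ j, X ω j * a j) + dd) ∂P
        = ∫ ω, (c * (∑ j, (X ω i * X ω j) * a j) + dd * X ω i) ∂P :=
          integral_congr_ae (Filter.Eventually.of_forall hpt)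
      _ = c * ∑ j, (∫ ω, X ω i * X ω j ∂P) * a j + dd * ∫ ω, X ω i ∂P := by
          rw [integral_add ((integrable_finset_sum _ (fun j _ =>
              (hXX i j).mul_const (a j))).const_mul c) ((hXi i).const_mul dd),
            integral_const_mul, integral_const_mul,
            integral_finset_sum _ (fun j _ => (hXX i j).mul_const (a j))]
          congr 2
          exact Finset.sum_congr rfl (fun j _ => integral_mul_const (a j) _)
  have hInt1 : ∀ i, Integrable (fun ω => X ω i * (c * H ω + dd)) P := by
    intro i
    have h : Integrable (fun ω => c * (X ω i * H ω) + dd * X ω i) P :=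
      ((hXH i).const_mul c).add ((hXi i).const_mul dd)
    exact h.congr (Filter.Eventually.of_forall (fun ω => by ring))
  -- keyH : LHS of h2
  have keyH : ∀ i,
      ∫ ω, X ω i * (c * (H ω + ∑ j, X ω j * β j) + dd) ∂P
        = (∫ ω, X ω i * (c * H ω + dd) ∂P) + c * ∑ j, (∫ ω, X ω i * X ω j ∂P) * β j := by
    intro i
    have hpt : ∀ ω, X ω i * (c * (H ω + ∑ j, X ω j * β j) + dd)
        = X ω i * (c * H ω + dd) + c * (∑ j, (X ω i * X ω j) * β j) := by
      intro ω
      rw [← hsum β i ω]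
      ring
    calc ∫ ω, X ω i * (c * (H ω + ∑ j, X ω j * β j) + dd) ∂P
        = ∫ ω, (X ω i * (c * H ω + dd) + c * (∑ j, (X ω i * X ω j) * β j)) ∂P :=
          integral_congr_ae (Filter.Eventually.of_forall hpt)
      _ = (∫ ω, X ω i * (c * H ω + dd) ∂P) + c * ∑ j, (∫ ω, X ω i * X ω j ∂P) * β j := by
          rw [integral_add (hInt1 i) ((integrable_finset_sum _ (fun j _ =>
              (hXX i j).mul_const (β j))).const_mul c),
            integral_const_mul, integral_finset_sum _ (fun j _ => (hXX i j).mul_const (β j))]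
          congr 2
          exact Finset.sum_congr rfl (fun j _ => integral_mul_const (β j) _)
  -- derive M β = M βs componentwise
  have hMv : ∀ i, ∑ j, (∫ ω, X ω i * X ω j ∂P) * (βs j - β j) = 0 := by
    intro i
    have e1 : ∫ ω, X ω i * (c * H ω + dd) ∂P
        = c * ∑ j, (∫ ω, X ω i * X ω j ∂P) * αs j + dd * ∫ ω, X ω i ∂P :=
      (h1 i).trans (key αs i)
    have hk2 : ∫ ω, X ω i * (c * (∑ j, X ω j * (αs j + βs j)) + dd) ∂P
        = c * ∑ j, (∫ ω, X ω i * X ω j ∂P) * (αs j + βs j) + dd * ∫ ω, X ω i ∂P :=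
      key _ i
    have e2 : (∫ ω, X ω i * (c * H ω + dd) ∂P)
          + c * ∑ j, (∫ ω, X ω i * X ω j ∂P) * β j
        = c * ∑ j, (∫ ω, X ω i * X ω j ∂P) * (αs j + βs j) + dd * ∫ ω, X ω i ∂P :=
      (keyH i).symm.trans ((h2 i).trans hk2)
    have expand : ∑ j, (∫ ω, X ω i * X ω j ∂P) * (αs j + βs j)
        = ∑ j, (∫ ω, X ω i * X ω j ∂P) * αs j
          + ∑ j, (∫ ω, X ω i * X ω j ∂P) * βs j := by
      rw [← Finset.sum_add_distrib]
      exact Finset.sum_congr rfl (fun j _ => by ring)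
    rw [expand] at e2
    rw [e1] at e2
    have h3 : ∑ j, (∫ ω, X ω i * X ω j ∂P) * β j
        = ∑ j, (∫ ω, X ω i * X ω j ∂P) * βs j := by
      apply mul_left_cancel₀ hc
      linarith
    have : ∑ j, ((∫ ω, X ω i * X ω j ∂P) * βs j - (∫ ω, X ω i * X ω j ∂P) * β j) = 0 := by
      rw [Finset.sum_sub_distrib, ← h3, sub_self]
    calc ∑ j, (∫ ω, X ω i * X ω j ∂P) * (βs j - β j)
        = ∑ j, ((∫ ω, X ω i * X ω j ∂P) * βs j - (∫ ω, X ω i * X ω j ∂P) * β j) :=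
          Finset.sum_congr rfl (fun j _ => by ring)
      _ = 0 := this
  -- now positive definiteness
  have hv0 : βs - β = 0 := by
    by_contra hne
    have hpos := hpd.dotProduct_mulVec_pos hne
    have hz : M.mulVec (βs - β) = 0 := by
      funext i
      simpa [M, Matrix.mulVec, dotProduct] using hMv i
    rw [hz] at hpos
    simp at hpos
  exact sub_eq_zero.mp hv0
end

section
/- Let (Ω, 𝒜, P) be a probability space, E a measurable space, X : Ω → E measurable, and T : Ω → {0, 1, …, K} a measurable (multi-valued) treatment variable. Let e_t : E → [0,1] and η_t : E → ℝ, t = 0, …, K, be bounded measurable functions such that for every t and every bounded measurable f : E → ℝ, E[1{T=t}·f(X)] = E[e_t(X)·f(X)]. Let ψ : ℝ → ℝ be twice continuously differentiable with ψ″ > 0, set V_t(x) := ψ″(η_t(x)), assume Σ_{s=0}^K e_s(x)·V_s(x) > 0 for all x, and define a_t(x) := e_t(x)·V_t(x) / Σ_{s=0}^K e_s(x)·V_s(x). Then for every t ∈ {0, …, K} and every bounded measurable g : E → ℝ, E[ ψ″(η_T(X)) · (1{T=t} − a_t(X)) · g(X) ] = 0, where η_T(ω) := η_{T(ω)}(X(ω)).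 (This is the multi-valued-treatment orthogonality underlying the generalized construction (8.5) of the paper.) -/
open MeasureTheory Set

/-- **Multi-valued-treatment orthogonality (paper, Section 8, construction (8.5)).**
With generalized propensities `e_t(X)` (versions of `P(T = t | X)`), variance functions
`V_t(x) = ψ''(η_t(x))`, and modified propensities
`a_t(x) = e_t(x)V_t(x)/∑_s e_s(x)V_s(x)`, for every arm `t` and bounded measurable `g`,
`E[ψ''(η_T(X))·(1{T=t} − a_t(X))·g(X)] = 0`. -/
theorem dina_multivalued_orthogonality
    {Ω E : Type*} [MeasurableSpace Ω] [MeasurableSpace E]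
    (P : Measure Ω) [IsProbabilityMeasure P] (K : ℕ)
    (X : Ω → E) (hX : Measurable X)
    (T : Ω → Fin (K + 1)) (hT : Measurable T)
    (e η : Fin (K + 1) → E → ℝ)
    (hem : ∀ t, Measurable (e t)) (heb : ∀ t x, e t x ∈ Icc (0 : ℝ) 1)
    (hηm : ∀ t, Measurable (η t)) (hηb : ∀ t, ∃ C, ∀ x, |η t x| ≤ C)
    (ψ : ℝ → ℝ) (hψ : ContDiff ℝ 2 ψ) (hψpos : ∀ u, 0 < deriv (deriv ψ) u)
    (hpos : ∀ x, 0 < ∑ s, e s x * deriv (deriv ψ) (η s x))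
    (hprop : ∀ t, ∀ f : E → ℝ, Measurable f → (∃ C, ∀ x, |f x| ≤ C) →
      ∫ ω, (if T ω = t then (1 : ℝ) else 0) * f (X ω) ∂P
        = ∫ ω, e t (X ω) * f (X ω) ∂P) :
    ∀ t, ∀ g : E → ℝ, Measurable g → (∃ C, ∀ x, |g x| ≤ C) →
      ∫ ω, deriv (deriv ψ) (η (T ω) (X ω)) *
        ((if T ω = t then (1 : ℝ) else 0) - e t (X ω) * deriv (deriv ψ) (η t (X ω)) /
          (∑ s, e s (X ω) * deriv (deriv ψ) (η s (X ω)))) * g (X ω) ∂P = 0 := by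
  intro t g hg hgb
  -- notation
  set ψ'' : ℝ → ℝ := deriv (deriv ψ) with hψ''def
  have hψ''cont : Continuous ψ'' := by
    have h1 : ContDiff ℝ 1 (deriv ψ) :=
      (contDiff_succ_iff_deriv.mp (show ContDiff ℝ (1 + 1) ψ by norm_num; exact hψ)).2.2
    exact h1.continuous_deriv le_rfl
  set V : Fin (K + 1) → E → ℝ := fun s x => ψ'' (η s x) with hVdef
  set S : E → ℝ := fun x => ∑ s, e s x * V s x with hSdef
  set a : E → ℝ := fun x => e t x * V t x / S x with hadef
  have hVm : ∀ s, Measurable (V s) := fun s => hψ''cont.measurable.comp (hηm s)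
  have hVb : ∀ s, ∃ C, ∀ x, |V s x| ≤ C := by
    intro s
    obtain ⟨C, hC⟩ := hηb s
    obtain ⟨M, hM⟩ := (isCompact_Icc (a := -C) (b := C)).exists_bound_of_continuousOn
      hψ''cont.continuousOn
    exact ⟨M, fun x => hM (η s x) (abs_le.mp (hC x))⟩
  have hSpos : ∀ x, 0 < S x := hpos
  have hVpos : ∀ s x, 0 < V s x := fun s x => hψpos _
  have hle : ∀ x, e t x * V t x ≤ S x := by
    intro x
    exact Finset.single_le_sum
      (f := fun s => e s x * V s x)
      (fun s _ => mul_nonneg (heb s x).1 (hVpos s x).le) (Finset.mem_univ t)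
  have ham : Measurable a :=
    ((hem t).mul (hVm t)).div (Finset.measurable_sum _ fun s _ => (hem s).mul (hVm s))
  have hab : ∀ x, |a x| ≤ 1 := by
    intro x
    rw [abs_of_nonneg (div_nonneg (mul_nonneg (heb t x).1 (hVpos t x).le) (hSpos x).le)]
    exact div_le_one_of_le₀ (hle x) (hSpos x).le
  have hSm : Measurable S := Finset.measurable_sum _ fun s _ => (hem s).mul (hVm s)
  -- integrability helper
  have hint : ∀ F : Ω → ℝ, Measurable F → (∃ C, ∀ ω, |F ω| ≤ C) → Integrable F P := by
    rintro F hF ⟨C, hC⟩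
    exact (integrable_const C).mono' hF.aestronglyMeasurable
      (Filter.Eventually.of_forall fun ω => by simpa [Real.norm_eq_abs] using hC ω)
  obtain ⟨Cg, hCg⟩ := hgb
  -- indicator functions
  have hindm : ∀ s : Fin (K + 1), Measurable (fun ω => if T ω = s then (1 : ℝ) else 0) :=
    fun s => Measurable.ite (hT (measurableSet_singleton s)) measurable_const measurable_const
  have hindb : ∀ s : Fin (K + 1), ∀ ω, |if T ω = s then (1 : ℝ) else 0| ≤ 1 := by
    intro s ω; split <;> simp
  -- the two families of E-functions
  set f₁ : E → ℝ := fun x => V t x * g x with hf₁def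
  set f₂ : Fin (K + 1) → E → ℝ := fun s x => V s x * (a x * g x) with hf₂def
  have hf₁m : Measurable f₁ := (hVm t).mul hg
  have hf₂m : ∀ s, Measurable (f₂ s) := fun s => (hVm s).mul (ham.mul hg)
  have hf₁b : ∃ C, ∀ x, |f₁ x| ≤ C := by
    obtain ⟨M, hM⟩ := hVb t
    exact ⟨M * Cg, fun x => by
      rw [abs_mul]
      exact mul_le_mul (hM x) (hCg x) (abs_nonneg _) (le_trans (abs_nonneg _) (hM x))⟩
  have hf₂b : ∀ s, ∃ C, ∀ x, |f₂ s x| ≤ C := by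
    intro s
    obtain ⟨M, hM⟩ := hVb s
    refine ⟨M * Cg, fun x => ?_⟩
    rw [abs_mul, abs_mul]
    have h1 : |a x| * |g x| ≤ 1 * Cg :=
      mul_le_mul (hab x) (hCg x) (abs_nonneg _) zero_le_one
    rw [one_mul] at h1
    exact mul_le_mul (hM x) h1 (mul_nonneg (abs_nonneg _) (abs_nonneg _))
      (le_trans (abs_nonneg _) (hM x))
  -- pointwise decomposition of the integrand
  have hpt : ∀ ω, ψ'' (η (T ω) (X ω)) *
      ((if T ω = t then (1 : ℝ) else 0) - a (X ω)) * g (X ω)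
      = (if T ω = t then (1 : ℝ) else 0) * f₁ (X ω)
        - ∑ s, (if T ω = s then (1 : ℝ) else 0) * f₂ s (X ω) := by
    intro ω
    have hsum : ∑ s, (if T ω = s then (1 : ℝ) else 0) * f₂ s (X ω) = f₂ (T ω) (X ω) := by
      rw [Finset.sum_eq_single (T ω)]
      · simp
      · intro s _ hs; simp [Ne.symm hs]
      · simp
    rw [hsum]
    by_cases h : T ω = t
    · subst h; simp only [if_pos rfl, hf₁def, hf₂def]; ring
    · simp only [if_neg h, hf₁def, hf₂def]; ring
  -- integrability of each piece
  have hint₁ : Integrable (fun ω => (if T ω = t then (1 : ℝ) else 0) * f₁ (X ω)) P := by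
    obtain ⟨C, hC⟩ := hf₁b
    refine hint _ ((hindm t).mul (hf₁m.comp hX)) ⟨C, fun ω => ?_⟩
    rw [abs_mul]
    exact le_trans (mul_le_mul (hindb t ω) (hC (X ω)) (abs_nonneg _) zero_le_one)
      (by rw [one_mul])
  have hint₂ : ∀ s : Fin (K + 1),
      Integrable (fun ω => (if T ω = s then (1 : ℝ) else 0) * f₂ s (X ω)) P := by
    intro s
    obtain ⟨C, hC⟩ := hf₂b s
    refine hint _ ((hindm s).mul ((hf₂m s).comp hX)) ⟨C, fun ω => ?_⟩
    rw [abs_mul]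
    exact le_trans (mul_le_mul (hindb s ω) (hC (X ω)) (abs_nonneg _) zero_le_one)
      (by rw [one_mul])
  -- compute
  calc ∫ ω, ψ'' (η (T ω) (X ω)) *
        ((if T ω = t then (1 : ℝ) else 0) - a (X ω)) * g (X ω) ∂P
      = ∫ ω, ((if T ω = t then (1 : ℝ) else 0) * f₁ (X ω)
          - ∑ s, (if T ω = s then (1 : ℝ) else 0) * f₂ s (X ω)) ∂P := by
        exact integral_congr_ae (Filter.Eventually.of_forall hpt)
    _ = (∫ ω, (if T ω = t then (1 : ℝ) else 0) * f₁ (X ω) ∂P)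
          - ∫ ω, (∑ s, (if T ω = s then (1 : ℝ) else 0) * f₂ s (X ω)) ∂P :=
        integral_sub hint₁ (integrable_finset_sum _ fun s _ => hint₂ s)
    _ = (∫ ω, (if T ω = t then (1 : ℝ) else 0) * f₁ (X ω) ∂P)
          - ∑ s, ∫ ω, (if T ω = s then (1 : ℝ) else 0) * f₂ s (X ω) ∂P := by
        rw [integral_finset_sum _ fun s _ => hint₂ s]
    _ = (∫ ω, e t (X ω) * f₁ (X ω) ∂P) - ∑ s, ∫ ω, e s (X ω) * f₂ s (X ω) ∂P := by
        rw [hprop t f₁ hf₁m hf₁b]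
        congr 1
        exact Finset.sum_congr rfl fun s _ => hprop s (f₂ s) (hf₂m s) (hf₂b s)
    _ = (∫ ω, e t (X ω) * f₁ (X ω) ∂P) - ∫ ω, (∑ s, e s (X ω) * f₂ s (X ω)) ∂P := by
        rw [integral_finset_sum]
        intro s _
        obtain ⟨C, hC⟩ := hf₂b s
        refine hint _ ((hem s).comp hX |>.mul ((hf₂m s).comp hX)) ⟨C, fun ω => ?_⟩
        rw [abs_mul]
        have he1 : |e s (X ω)| ≤ 1 := by
          rw [abs_of_nonneg (heb s (X ω)).1]; exact (heb s (X ω)).2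
        exact le_trans (mul_le_mul he1 (hC (X ω)) (abs_nonneg _) zero_le_one)
          (by rw [one_mul])
    _ = ∫ ω, (e t (X ω) * f₁ (X ω) - ∑ s, e s (X ω) * f₂ s (X ω)) ∂P := by
        rw [integral_sub]
        · obtain ⟨C, hC⟩ := hf₁b
          refine hint _ ((hem t).comp hX |>.mul (hf₁m.comp hX)) ⟨C, fun ω => ?_⟩
          rw [abs_mul]
          have he1 : |e t (X ω)| ≤ 1 := by
            rw [abs_of_nonneg (heb t (X ω)).1]; exact (heb t (X ω)).2
          exact le_trans (mul_le_mul he1 (hC (X ω)) (abs_nonneg _) zero_le_one)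
            (by rw [one_mul])
        · refine integrable_finset_sum _ fun s _ => ?_
          obtain ⟨C, hC⟩ := hf₂b s
          refine hint _ ((hem s).comp hX |>.mul ((hf₂m s).comp hX)) ⟨C, fun ω => ?_⟩
          rw [abs_mul]
          have he1 : |e s (X ω)| ≤ 1 := by
            rw [abs_of_nonneg (heb s (X ω)).1]; exact (heb s (X ω)).2
          exact le_trans (mul_le_mul he1 (hC (X ω)) (abs_nonneg _) zero_le_one)
            (by rw [one_mul])
    _ = ∫ ω, (0 : ℝ) ∂P := by
        refine integral_congr_ae (Filter.Eventually.of_forall fun ω => ?_)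
        show e t (X ω) * f₁ (X ω) - ∑ s, e s (X ω) * f₂ s (X ω) = 0
        have key : ∑ s, e s (X ω) * f₂ s (X ω) = S (X ω) * (a (X ω) * g (X ω)) := by
          simp only [hf₂def, hSdef]
          rw [Finset.sum_mul]
          exact Finset.sum_congr rfl fun s _ => by ring
        rw [key]
        have hScancel : S (X ω) * a (X ω) = e t (X ω) * V t (X ω) := by
          rw [hadef]
          field_simp
          rw [mul_assoc]; exact mul_div_cancel_left₀ _ (hSpos (X ω)).ne'
        have : S (X ω) * (a (X ω) * g (X ω)) = (S (X ω) * a (X ω)) * g (X ω) := by ring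
        rw [this, hScancel, hf₁def]
        ring
    _ = 0 := integral_zero _ _
end
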